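/- arXiv:2006.09877 — 2 statements merged into one kernel-verified Lean document; each statement's English description precedes it below -/
import Mathlib

section
/- Let t ≥ 1 and let G and H be finite simple graphs. If G is K_{t,t}-free, then the strong product G ⊠ H is K_{s,s}-free, where s = 2t(Δ(H)+1) and Δ(H) is the maximum degree of H. -/
/-- The strong product of two simple graphs. -/
def strongProd {V W : Type*} (G : SimpleGraph V) (H : SimpleGraph W) : SimpleGraph (V × W) where
  Adj a b := a ≠ b ∧ (a.1 = b.1 ∨ G.Adj a.1 b.1) ∧ (a.2 = b.2 ∨ H.Adj a.2 b.2)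
  symm := ⟨by
    rintro a b ⟨hne, h1, h2⟩
    exact ⟨hne.symm, h1.imp Eq.symm (fun h => h.symm), h2.imp Eq.symm (fun h => h.symm)⟩⟩
  loopless := ⟨fun a h => h.1 rfl⟩

/-- The maximum degree of a finite simple graph. -/
noncomputable def maxDeg {W : Type*} [Fintype W] (H : SimpleGraph W) : ℕ :=
  Finset.univ.sup fun v => {u | H.Adj v u}.ncard

/-- `G` is `K_{t,t}`-free: it contains no complete bipartite subgraph `K_{t,t}`. -/
def KttFree {V : Type*} (G : SimpleGraph V) (t : ℕ) : Prop :=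
  ¬ ∃ (A B : Finset V), Disjoint A B ∧ A.card = t ∧ B.card = t ∧
      ∀ a ∈ A, ∀ b ∈ B, G.Adj a b

/-- projection lemma: if every element of `S` is "strongly adjacent" to `w₀` in the
second coordinate, then the first-coordinate projection of `S` is large. -/
lemma proj_large {V W : Type*} [Fintype W] [DecidableEq V] [DecidableEq W]
    (H : SimpleGraph W) (S : Finset (V × W)) (w₀ : W)
    (hadj : ∀ p ∈ S, p.2 = w₀ ∨ H.Adj p.2 w₀) :
    S.card ≤ (S.image Prod.fst).card * (maxDeg H + 1) := by
  classical
  set N : Finset W := insert w₀ (Set.toFinite {u | H.Adj w₀ u}).toFinset with hN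
  have hsub : S ⊆ (S.image Prod.fst) ×ˢ N := by
    rintro ⟨a, w⟩ hp
    refine Finset.mem_product.2 ⟨Finset.mem_image_of_mem _ hp, ?_⟩
    rcases hadj _ hp with h | h
    · exact Finset.mem_insert.2 (Or.inl h)
    · exact Finset.mem_insert_of_mem ((Set.Finite.mem_toFinset _).2 h.symm)
  have hNcard : N.card ≤ maxDeg H + 1 := by
    have h1 : (Set.toFinite {u | H.Adj w₀ u}).toFinset.card ≤ maxDeg H := by
      rw [← Set.ncard_eq_toFinset_card]
      exact Finset.le_sup (f := fun v => {u | H.Adj v u}.ncard) (Finset.mem_univ w₀)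
    have h2 := Finset.card_insert_le w₀ (Set.toFinite {u | H.Adj w₀ u}).toFinset
    rw [hN]
    omega
  calc S.card ≤ ((S.image Prod.fst) ×ˢ N).card := Finset.card_le_card hsub
    _ = (S.image Prod.fst).card * N.card := Finset.card_product _ _
    _ ≤ (S.image Prod.fst).card * (maxDeg H + 1) := Nat.mul_le_mul_left _ hNcard

/-- if `G` is `K_{t,t}`-free then `G ⊠ H` is `K_{s,s}`-free for
`s = 2t(Δ(H)+1)`. -/
theorem strong_product_biclique_free {V W : Type*} [Fintype W] (t : ℕ) (ht : 1 ≤ t)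
    (G : SimpleGraph V) (H : SimpleGraph W) (hG : KttFree G t) :
    KttFree (strongProd G H) (2 * t * (maxDeg H + 1)) := by
  classical
  rintro ⟨A, B, _, hA, hB, hadj⟩
  have hApos : 0 < A.card := by rw [hA]; positivity
  have hBpos : 0 < B.card := by rw [hB]; positivity
  obtain ⟨⟨v₀, w₀⟩, hb₀⟩ := Finset.card_pos.mp hBpos
  obtain ⟨⟨v₁, w₁⟩, ha₁⟩ := Finset.card_pos.mp hApos
  have hXcard : 2 * t ≤ (A.image Prod.fst).card := by
    have h := proj_large H A w₀ (fun p hp => ((show _ ∧ _ ∧ _ from hadj p hp _ hb₀).2.2))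
    rw [hA] at h
    exact Nat.le_of_mul_le_mul_right h (Nat.succ_pos _)
  have hYcard : 2 * t ≤ (B.image Prod.fst).card := by
    have h := proj_large H B w₁ (fun p hp =>
      (show _ ∧ _ ∧ _ from (strongProd G H).adj_symm (hadj _ ha₁ p hp)).2.2)
    rw [hB] at h
    exact Nat.le_of_mul_le_mul_right h (Nat.succ_pos _)
  obtain ⟨B₀, hB₀sub, hB₀card⟩ :=
    Finset.exists_subset_card_eq (le_trans (Nat.le_mul_of_pos_left t two_pos) hYcard)
  have hXB : t ≤ ((A.image Prod.fst) \ B₀).card := by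
    have h2 := Finset.le_card_sdiff B₀ (A.image Prod.fst)
    omega
  obtain ⟨A₀, hA₀sub, hA₀card⟩ := Finset.exists_subset_card_eq hXB
  refine hG ⟨A₀, B₀, ?_, hA₀card, hB₀card, ?_⟩
  · exact Finset.disjoint_left.2 fun x hx hx' =>
      (Finset.mem_sdiff.1 (hA₀sub hx)).2 hx'
  · intro a ha b hb
    obtain ⟨⟨a', wa⟩, hpa, rfl⟩ := Finset.mem_image.1 (Finset.mem_sdiff.1 (hA₀sub ha)).1
    obtain ⟨⟨b', wb⟩, hpb, rfl⟩ := Finset.mem_image.1 (hB₀sub hb)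
    have hne : a' ≠ b' := fun h => (Finset.mem_sdiff.1 (hA₀sub ha)).2 (h ▸ hb)
    rcases (show _ ∧ _ ∧ _ from hadj _ hpa _ hpb).2.1 with h | h
    · exact absurd h hne
    · exact h
end

section
/- There is a function f : ℕ⁴ → ℕ such that the following holds: if G and H are finite simple graphs with tww(G) ≤ a, tww(H) ≤ b, Δ(H) ≤ D, and the strong product G ⊠ H is K_{t,t}-free, then every subgraph of G ⊠ H has twin-width at most f(a, b, D, t). -/
/-- A trigraph: a finite vertex set with disjoint black and red edge sets. -/
structure Trigraph (V : Type*) where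
  verts : Finset V
  black : V → V → Prop
  red : V → V → Prop
  black_symm : ∀ u v, black u v → black v u
  red_symm : ∀ u v, red u v → red v u
  black_irrefl : ∀ u, ¬ black u u
  red_irrefl : ∀ u, ¬ red u u
  black_red_disjoint : ∀ u v, black u v → ¬ red u v
  black_mem : ∀ u v, black u v → u ∈ verts ∧ v ∈ verts
  red_mem : ∀ u v, red u v → u ∈ verts ∧ v ∈ verts

namespace Trigraph

variable {V : Type*} [DecidableEq V]

/-- The red degree of a vertex. -/
noncomputable def redDeg (G : Trigraph V) (x : V) : ℕ := {y | G.red x y}.ncard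

/-- `G` is a `d`-trigraph: every vertex is incident to at most `d` red edges. -/
def RedDegLE (G : Trigraph V) (d : ℕ) : Prop := ∀ x, G.redDeg x ≤ d

/-- `G'` is obtained from `G` by contracting the two distinct vertices `u` and `v`
(the contracted vertex is represented by `u`, and `v` is deleted). -/
def IsContractionAt (G G' : Trigraph V) (u v : V) : Prop :=
  u ∈ G.verts ∧ v ∈ G.verts ∧ u ≠ v ∧
  G'.verts = G.verts.erase v ∧
  (∀ x y, x ≠ u → y ≠ u → (G'.black x y ↔ (G.black x y ∧ x ≠ v ∧ y ≠ v))) ∧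
  (∀ x y, x ≠ u → y ≠ u → (G'.red x y ↔ (G.red x y ∧ x ≠ v ∧ y ≠ v))) ∧
  (∀ x, x ≠ u → x ≠ v → (G'.black u x ↔ (G.black u x ∧ G.black v x))) ∧
  (∀ x, x ≠ u → x ≠ v →
    (G'.red u x ↔
      ((G.black u x ∨ G.red u x ∨ G.black v x ∨ G.red v x) ∧ ¬ (G.black u x ∧ G.black v x))))

/-- `G'` is obtained from `G` by contracting some pair of vertices. -/
def IsContraction (G G' : Trigraph V) : Prop := ∃ u v, IsContractionAt G G' u v

/-- `G` admits a `d`-sequence: a sequence `G = G_n, …, G_1` of `d`-trigraphs, each obtained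
from the previous one by a contraction, ending in a one-vertex trigraph. -/
def HasSeq (G : Trigraph V) (d : ℕ) : Prop :=
  ∃ f : ℕ → Trigraph V,
    f G.verts.card = G ∧
    (∀ i, 1 ≤ i → i < G.verts.card → IsContraction (f (i + 1)) (f i)) ∧
    (∀ i, 1 ≤ i → i ≤ G.verts.card → (f i).RedDegLE d)

/-- The twin-width of a trigraph: the least `d` such that it admits a `d`-sequence. -/
noncomputable def tww (G : Trigraph V) : ℕ := sInf {d | G.HasSeq d}

end Trigraph

/-- The trigraph induced by a simple graph `G` on the vertex set `s`: all edges black. -/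
def SimpleGraph.toTrigraphOn {V : Type*} (G : SimpleGraph V) (s : Finset V) : Trigraph V where
  verts := s
  black u v := G.Adj u v ∧ u ∈ s ∧ v ∈ s
  red _ _ := False
  black_symm := fun _ _ ⟨h, hu, hv⟩ => ⟨h.symm, hv, hu⟩
  red_symm := fun _ _ h => h.elim
  black_irrefl := fun u h => G.loopless.irrefl u h.1
  red_irrefl := fun _ h => h
  black_red_disjoint := fun _ _ _ h => h
  black_mem := fun _ _ ⟨_, hu, hv⟩ => ⟨hu, hv⟩
  red_mem := fun _ _ h => h.elim

/-- The trigraph associated to a finite simple graph: all edges black. -/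
def SimpleGraph.toTrigraph {V : Type*} [Fintype V] (G : SimpleGraph V) : Trigraph V :=
  G.toTrigraphOn Finset.univ

namespace TwwAux

open Finset

set_option linter.unusedSectionVars false

attribute [local instance] Classical.propDecidable

variable {α : Type*} [DecidableEq α]

/-- `r` is a valid representative map on `s`. -/
def Good (s : Finset α) (r : α → α) : Prop :=
  (∀ x ∈ s, r x ∈ s) ∧ (∀ x, r (r x) = r x) ∧ (∀ x ∉ s, r x = x)

/-- The class of representative `p`. -/
def clF (s : Finset α) (r : α → α) (p : α) : Finset α := s.filter (fun x => r x = p)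

def Compl (Γ : SimpleGraph α) (A B : Finset α) : Prop := ∀ x ∈ A, ∀ y ∈ B, Γ.Adj x y
def HasE (Γ : SimpleGraph α) (A B : Finset α) : Prop := ∃ x ∈ A, ∃ y ∈ B, Γ.Adj x y
def MixedP (Γ : SimpleGraph α) (A B : Finset α) : Prop := HasE Γ A B ∧ ¬ Compl Γ A B

lemma Compl.symm {Γ : SimpleGraph α} {A B : Finset α} (h : Compl Γ A B) : Compl Γ B A :=
  fun x hx y hy => (h y hy x hx).symm

lemma HasE.symm {Γ : SimpleGraph α} {A B : Finset α} (h : HasE Γ A B) : HasE Γ B A := by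
  obtain ⟨x, hx, y, hy, hadj⟩ := h
  exact ⟨y, hy, x, hx, hadj.symm⟩

lemma MixedP.symm {Γ : SimpleGraph α} {A B : Finset α} (h : MixedP Γ A B) : MixedP Γ B A :=
  ⟨h.1.symm, fun hc => h.2 hc.symm⟩

lemma Compl.mono {Γ : SimpleGraph α} {A B A' B' : Finset α} (h : Compl Γ A B)
    (hA : A' ⊆ A) (hB : B' ⊆ B) : Compl Γ A' B' :=
  fun x hx y hy => h x (hA hx) y (hB hy)

lemma HasE.mono {Γ : SimpleGraph α} {A B A' B' : Finset α} (h : HasE Γ A B)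
    (hA : A ⊆ A') (hB : B ⊆ B') : HasE Γ A' B' := by
  obtain ⟨x, hx, y, hy, hadj⟩ := h
  exact ⟨x, hA hx, y, hB hy, hadj⟩

lemma not_mixedP_singleton (Γ : SimpleGraph α) (x y : α) : ¬ MixedP Γ {x} {y} := by
  rintro ⟨⟨x', hx', y', hy', hadj⟩, hnc⟩
  simp only [mem_singleton] at hx' hy'
  subst hx'; subst hy'
  exact hnc (fun u hu v hv => by
    simp only [mem_singleton] at hu hv
    subst hu; subst hv; exact hadj)

lemma compl_union_left {Γ : SimpleGraph α} {A B C : Finset α} :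
    Compl Γ (A ∪ B) C ↔ Compl Γ A C ∧ Compl Γ B C := by
  constructor
  · intro h
    exact ⟨fun x hx => h x (mem_union_left _ hx), fun x hx => h x (mem_union_right _ hx)⟩
  · rintro ⟨h1, h2⟩ x hx y hy
    rcases mem_union.1 hx with h | h
    · exact h1 x h y hy
    · exact h2 x h y hy

lemma hasE_union_left {Γ : SimpleGraph α} {A B C : Finset α} :
    HasE Γ (A ∪ B) C ↔ HasE Γ A C ∨ HasE Γ B C := by
  constructor
  · rintro ⟨x, hx, y, hy, hadj⟩
    rcases mem_union.1 hx with h | h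
    · exact Or.inl ⟨x, h, y, hy, hadj⟩
    · exact Or.inr ⟨x, h, y, hy, hadj⟩
  · rintro (⟨x, hx, y, hy, hadj⟩ | ⟨x, hx, y, hy, hadj⟩)
    · exact ⟨x, mem_union_left _ hx, y, hy, hadj⟩
    · exact ⟨x, mem_union_right _ hx, y, hy, hadj⟩

/-- The quotient trigraph of `Γ` on `s` induced by the representative map `r`. -/
noncomputable def Qt (Γ : SimpleGraph α) (s : Finset α) (r : α → α) : Trigraph α where
  verts := s.filter (fun x => r x = x)
  black p q := p ≠ q ∧ p ∈ s ∧ q ∈ s ∧ r p = p ∧ r q = q ∧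
    Compl Γ (clF s r p) (clF s r q)
  red p q := p ≠ q ∧ p ∈ s ∧ q ∈ s ∧ r p = p ∧ r q = q ∧
    HasE Γ (clF s r p) (clF s r q) ∧ ¬ Compl Γ (clF s r p) (clF s r q)
  black_symm := by
    rintro u v ⟨h1, h2, h3, h4, h5, h6⟩
    exact ⟨h1.symm, h3, h2, h5, h4, h6.symm⟩
  red_symm := by
    rintro u v ⟨h1, h2, h3, h4, h5, h6, h7⟩
    exact ⟨h1.symm, h3, h2, h5, h4, h6.symm, fun hc => h7 hc.symm⟩
  black_irrefl := fun u h => h.1 rfl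
  red_irrefl := fun u h => h.1 rfl
  black_red_disjoint := by
    rintro u v ⟨_, _, _, _, _, h6⟩ ⟨_, _, _, _, _, _, h7⟩
    exact h7 h6
  black_mem := by
    rintro u v ⟨_, h2, h3, h4, h5, _⟩
    exact ⟨mem_filter.2 ⟨h2, h4⟩, mem_filter.2 ⟨h3, h5⟩⟩
  red_mem := by
    rintro u v ⟨_, h2, h3, h4, h5, _, _⟩
    exact ⟨mem_filter.2 ⟨h2, h4⟩, mem_filter.2 ⟨h3, h5⟩⟩

lemma self_mem_clF {s : Finset α} {r : α → α} {p : α} (hp : p ∈ s) (hrp : r p = p) :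
    p ∈ clF s r p := mem_filter.2 ⟨hp, hrp⟩

/-- Merging class `q` into class `p`. -/
def mg (r : α → α) (p q : α) : α → α := fun x => if r x = q then p else r x

section mgLemmas

variable {s : Finset α} {r : α → α} {p q : α}

lemma mg_apply (r : α → α) (p q x : α) : mg r p q x = if r x = q then p else r x := rfl

lemma mg_good (hr : Good s r) (hp : p ∈ s) (hrp : r p = p) (hq : q ∈ s) (hpq : p ≠ q) :
    Good s (mg r p q) := by
  refine ⟨fun x hx => ?_, fun x => ?_, fun x hx => ?_⟩
  · rw [mg_apply]; split
    · exact hp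
    · exact hr.1 x hx
  · rw [mg_apply, mg_apply]
    by_cases h : r x = q
    · rw [if_pos h, hrp, if_neg hpq]
    · rw [if_neg h, hr.2.1 x, if_neg h]
  · have hx' : r x = x := hr.2.2 x hx
    have hxq : x ≠ q := fun he => hx (he ▸ hq)
    rw [mg_apply, hx', if_neg hxq]

end mgLemmas

section mgLemmas2

variable {Γ : SimpleGraph α} {s : Finset α} {r : α → α} {p q : α}

lemma mg_fix_iff (hr : Good s r) (hrp : r p = p) (hpq : p ≠ q) (x : α) :
    mg r p q x = x ↔ r x = x ∧ x ≠ q := by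
  constructor
  · intro h
    by_cases hc : r x = q
    · exfalso
      rw [mg_apply, if_pos hc] at h
      subst h
      rw [hrp] at hc
      exact hpq hc
    · rw [mg_apply, if_neg hc] at h
      refine ⟨h, fun he => hc ?_⟩
      rw [he] at h ⊢
      exact h
  · rintro ⟨h1, h2⟩
    have : r x ≠ q := by rw [h1]; exact h2
    rw [mg_apply, if_neg this, h1]

lemma clF_mg_of_ne (hxp : p ≠ x) (hxq : q ≠ x) :
    clF s (mg r p q) x = clF s r x := by
  ext y
  simp only [clF, mem_filter, and_congr_right_iff]
  intro _
  rw [mg_apply]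
  by_cases hc : r y = q
  · rw [if_pos hc, hc]
    exact ⟨fun h => absurd h hxp, fun h => absurd h hxq⟩
  · rw [if_neg hc]

lemma clF_mg_self (hpq : p ≠ q) :
    clF s (mg r p q) p = clF s r p ∪ clF s r q := by
  ext y
  simp only [clF, mem_union, mem_filter]
  constructor
  · rintro ⟨hy, h⟩
    rw [mg_apply] at h
    by_cases hc : r y = q
    · exact Or.inr ⟨hy, hc⟩
    · rw [if_neg hc] at h
      exact Or.inl ⟨hy, h⟩
  · rintro (⟨hy, h⟩ | ⟨hy, h⟩)
    · have hne : r y ≠ q := by rw [h]; exact hpq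
      exact ⟨hy, by rw [mg_apply, if_neg hne, h]⟩
    · exact ⟨hy, by rw [mg_apply, if_pos h]⟩

lemma verts_Qt (Γ : SimpleGraph α) (s : Finset α) (r : α → α) :
    (Qt Γ s r).verts = s.filter (fun x => r x = x) := rfl

lemma black_Qt (x y : α) : (Qt Γ s r).black x y ↔
    (x ≠ y ∧ x ∈ s ∧ y ∈ s ∧ r x = x ∧ r y = y ∧ Compl Γ (clF s r x) (clF s r y)) :=
  Iff.rfl

lemma red_Qt (x y : α) : (Qt Γ s r).red x y ↔
    (x ≠ y ∧ x ∈ s ∧ y ∈ s ∧ r x = x ∧ r y = y ∧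
      HasE Γ (clF s r x) (clF s r y) ∧ ¬ Compl Γ (clF s r x) (clF s r y)) :=
  Iff.rfl

lemma hasE_iff_black_or_red (ha : a ∈ s) (hra : r a = a) (hx : x ∈ s) (hrx : r x = x)
    (hax : a ≠ x) :
    HasE Γ (clF s r a) (clF s r x) ↔ ((Qt Γ s r).black a x ∨ (Qt Γ s r).red a x) := by
  constructor
  · intro h
    by_cases hc : Compl Γ (clF s r a) (clF s r x)
    · exact Or.inl ⟨hax, ha, hx, hra, hrx, hc⟩
    · exact Or.inr ⟨hax, ha, hx, hra, hrx, h, hc⟩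
  · rintro (⟨_, _, _, _, _, hc⟩ | ⟨_, _, _, _, _, he, _⟩)
    · exact ⟨a, self_mem_clF ha hra, x, self_mem_clF hx hrx,
        hc a (self_mem_clF ha hra) x (self_mem_clF hx hrx)⟩
    · exact he

lemma isContractionAt_Qt (Γ : SimpleGraph α) (hr : Good s r)
    (hp : p ∈ s) (hq : q ∈ s) (hrp : r p = p) (hrq : r q = q) (hpq : p ≠ q) :
    Trigraph.IsContractionAt (Qt Γ s r) (Qt Γ s (mg r p q)) p q := by
  have hfix := mg_fix_iff (r := r) hr hrp hpq
  have hmgp : mg r p q p = p := (hfix p).2 ⟨hrp, hpq⟩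
  refine ⟨mem_filter.2 ⟨hp, hrp⟩, mem_filter.2 ⟨hq, hrq⟩, hpq, ?_, ?_, ?_, ?_, ?_⟩
  · -- verts
    ext x
    simp only [verts_Qt, mem_filter, mem_erase]
    rw [hfix x]
    tauto
  · -- black for x y ≠ p
    intro x y hxp hyp
    rw [black_Qt, black_Qt]
    constructor
    · rintro ⟨h1, h2, h3, h4, h5, h6⟩
      obtain ⟨h4', hxq⟩ := (hfix x).1 h4
      obtain ⟨h5', hyq⟩ := (hfix y).1 h5
      rw [clF_mg_of_ne (Ne.symm hxp) (Ne.symm hxq), clF_mg_of_ne (Ne.symm hyp) (Ne.symm hyq)] at h6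
      exact ⟨⟨h1, h2, h3, h4', h5', h6⟩, hxq, hyq⟩
    · rintro ⟨⟨h1, h2, h3, h4, h5, h6⟩, hxq, hyq⟩
      refine ⟨h1, h2, h3, (hfix x).2 ⟨h4, hxq⟩, (hfix y).2 ⟨h5, hyq⟩, ?_⟩
      rw [clF_mg_of_ne (Ne.symm hxp) (Ne.symm hxq), clF_mg_of_ne (Ne.symm hyp) (Ne.symm hyq)]
      exact h6
  · -- red for x y ≠ p
    intro x y hxp hyp
    rw [red_Qt, red_Qt]
    constructor
    · rintro ⟨h1, h2, h3, h4, h5, h6, h7⟩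
      obtain ⟨h4', hxq⟩ := (hfix x).1 h4
      obtain ⟨h5', hyq⟩ := (hfix y).1 h5
      rw [clF_mg_of_ne (Ne.symm hxp) (Ne.symm hxq), clF_mg_of_ne (Ne.symm hyp) (Ne.symm hyq)] at h6 h7
      exact ⟨⟨h1, h2, h3, h4', h5', h6, h7⟩, hxq, hyq⟩
    · rintro ⟨⟨h1, h2, h3, h4, h5, h6, h7⟩, hxq, hyq⟩
      refine ⟨h1, h2, h3, (hfix x).2 ⟨h4, hxq⟩, (hfix y).2 ⟨h5, hyq⟩, ?_⟩
      rw [clF_mg_of_ne (Ne.symm hxp) (Ne.symm hxq), clF_mg_of_ne (Ne.symm hyp) (Ne.symm hyq)]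
      exact ⟨h6, h7⟩
  · -- black p x
    intro x hxp hxq
    rw [black_Qt, black_Qt, black_Qt]
    constructor
    · rintro ⟨h1, h2, h3, _, h5, h6⟩
      obtain ⟨h5', hxq'⟩ := (hfix x).1 h5
      rw [clF_mg_self hpq, clF_mg_of_ne (Ne.symm hxp) (Ne.symm hxq), compl_union_left] at h6
      exact ⟨⟨h1, h2, h3, hrp, h5', h6.1⟩, Ne.symm hxq, hq, h3, hrq, h5', h6.2⟩
    · rintro ⟨⟨h1, h2, h3, _, h5, h6⟩, h1', _, _, _, _, h6'⟩
      refine ⟨h1, h2, h3, hmgp, (hfix x).2 ⟨h5, hxq⟩, ?_⟩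
      rw [clF_mg_self hpq, clF_mg_of_ne (Ne.symm hxp) (Ne.symm hxq), compl_union_left]
      exact ⟨h6, h6'⟩
  · -- red p x
    intro x hxp hxq
    rw [red_Qt]
    constructor
    · rintro ⟨h1, h2, h3, _, h5, h6, h7⟩
      obtain ⟨h5', _⟩ := (hfix x).1 h5
      rw [clF_mg_self hpq, clF_mg_of_ne (Ne.symm hxp) (Ne.symm hxq)] at h6 h7
      rw [hasE_union_left] at h6
      constructor
      · rcases h6 with h | h
        · rcases (hasE_iff_black_or_red hp hrp h3 h5' (Ne.symm hxp)).1 h with hb | hr'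
          · exact Or.inl hb
          · exact Or.inr (Or.inl hr')
        · rcases (hasE_iff_black_or_red hq hrq h3 h5' (Ne.symm hxq)).1 h with hb | hr'
          · exact Or.inr (Or.inr (Or.inl hb))
          · exact Or.inr (Or.inr (Or.inr hr'))
      · rintro ⟨hb1, hb2⟩
        exact h7 (compl_union_left.2 ⟨hb1.2.2.2.2.2, hb2.2.2.2.2.2⟩)
    · rintro ⟨hd, hnb⟩
      have hx3 : x ∈ s ∧ r x = x := by
        rcases hd with h | h | h | h
        · exact ⟨h.2.2.1, h.2.2.2.2.1⟩
        · exact ⟨h.2.2.1, h.2.2.2.2.1⟩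
        · exact ⟨h.2.2.1, h.2.2.2.2.1⟩
        · exact ⟨h.2.2.1, h.2.2.2.2.1⟩
      refine ⟨Ne.symm hxp, hp, hx3.1, hmgp, (hfix x).2 ⟨hx3.2, hxq⟩, ?_, ?_⟩
      · rw [clF_mg_self hpq, clF_mg_of_ne (Ne.symm hxp) (Ne.symm hxq), hasE_union_left]
        rcases hd with h | h | h | h
        · exact Or.inl ((hasE_iff_black_or_red hp hrp hx3.1 hx3.2 (Ne.symm hxp)).2 (Or.inl h))
        · exact Or.inl ((hasE_iff_black_or_red hp hrp hx3.1 hx3.2 (Ne.symm hxp)).2 (Or.inr h))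
        · exact Or.inr ((hasE_iff_black_or_red hq hrq hx3.1 hx3.2 (Ne.symm hxq)).2 (Or.inl h))
        · exact Or.inr ((hasE_iff_black_or_red hq hrq hx3.1 hx3.2 (Ne.symm hxq)).2 (Or.inr h))
      · rw [clF_mg_self hpq, clF_mg_of_ne (Ne.symm hxp) (Ne.symm hxq)]
        intro hc
        rw [compl_union_left] at hc
        exact hnb ⟨⟨Ne.symm hxp, hp, hx3.1, hrp, hx3.2, hc.1⟩,
          ⟨Ne.symm hxq, hq, hx3.1, hrq, hx3.2, hc.2⟩⟩

end mgLemmas2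

lemma trigraph_ext {G H : Trigraph α} (h1 : G.verts = H.verts) (h2 : G.black = H.black)
    (h3 : G.red = H.red) : G = H := by
  cases G; cases H
  cases h1; cases h2; cases h3
  rfl

lemma Qt_id (Γ : SimpleGraph α) (s : Finset α) : Qt Γ s id = Γ.toTrigraphOn s := by
  have hcl : ∀ p ∈ s, clF s (id : α → α) p = {p} := by
    intro p hp
    ext y
    simp only [clF, mem_filter, id_eq, mem_singleton]
    exact ⟨fun h => h.2, fun h => ⟨h ▸ hp, h⟩⟩
  refine trigraph_ext ?_ ?_ ?_
  · show s.filter (fun x => id x = x) = s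
    exact filter_true_of_mem (fun _ _ => rfl)
  · funext x y
    show (x ≠ y ∧ x ∈ s ∧ y ∈ s ∧ id x = x ∧ id y = y ∧
      Compl Γ (clF s id x) (clF s id y)) = (Γ.Adj x y ∧ x ∈ s ∧ y ∈ s)
    apply propext
    constructor
    · rintro ⟨h1, h2, h3, _, _, h6⟩
      rw [hcl x h2, hcl y h3] at h6
      exact ⟨h6 x (mem_singleton_self x) y (mem_singleton_self y), h2, h3⟩
    · rintro ⟨h1, h2, h3⟩
      refine ⟨h1.ne, h2, h3, rfl, rfl, ?_⟩
      rw [hcl x h2, hcl y h3]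
      intro u hu v hv
      rw [mem_singleton] at hu hv
      subst hu; subst hv
      exact h1
  · funext x y
    show (x ≠ y ∧ x ∈ s ∧ y ∈ s ∧ id x = x ∧ id y = y ∧
      HasE Γ (clF s id x) (clF s id y) ∧ ¬ Compl Γ (clF s id x) (clF s id y)) = False
    apply propext
    constructor
    · rintro ⟨h1, h2, h3, _, _, h6, h7⟩
      rw [hcl x h2, hcl y h3] at h6 h7
      exact not_mixedP_singleton Γ x y ⟨h6, h7⟩
    · exact False.elim

/-! ### Mixed neighbourhoods and the recursion engine -/

/-- The classes (given by representatives) mixed with the class of `p`. -/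
noncomputable def mixedNbrs (Γ : SimpleGraph α) (s : Finset α) (r : α → α) (p : α) :
    Finset α :=
  (s.image r).filter (fun w => w ≠ r p ∧ MixedP Γ (clF s r (r p)) (clF s r w))

lemma good_id (s : Finset α) : Good s (id : α → α) :=
  ⟨fun x hx => hx, fun _ => rfl, fun _ _ => rfl⟩

lemma good_mem_image {s : Finset α} {r : α → α} (hr : Good s r) {w : α}
    (hw : w ∈ s.image r) : w ∈ s ∧ r w = w := by
  obtain ⟨x, hx, rfl⟩ := mem_image.1 hw
  exact ⟨hr.1 x hx, hr.2.1 x⟩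

lemma redDegLE_of_mixed {Γ : SimpleGraph α} {s : Finset α} {r : α → α} {d : ℕ}
    (hr : Good s r) (h : ∀ p ∈ s, (mixedNbrs Γ s r p).card ≤ d) :
    Trigraph.RedDegLE (Qt Γ s r) d := by
  intro x
  unfold Trigraph.redDeg
  by_cases hx : x ∈ s ∧ r x = x
  · have hsub : {y | (Qt Γ s r).red x y} ⊆ ↑(mixedNbrs Γ s r x) := by
      intro y hy
      obtain ⟨h1, h2, h3, h4, h5, h6, h7⟩ := hy
      simp only [Finset.coe_filter, Set.mem_setOf_eq, mixedNbrs]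
      refine ⟨by rw [← h5]; exact mem_image_of_mem r h3, ?_, ?_⟩
      · rw [hx.2]; exact fun he => h1 he.symm
      · rw [hx.2]; exact ⟨h6, h7⟩
    calc {y | (Qt Γ s r).red x y}.ncard ≤ (↑(mixedNbrs Γ s r x) : Set α).ncard :=
          Set.ncard_le_ncard hsub (Set.Finite.ofFinset _ (fun _ => Iff.rfl))
      _ = (mixedNbrs Γ s r x).card := Set.ncard_coe_finset _
      _ ≤ d := h x hx.1
  · have : {y | (Qt Γ s r).red x y} = ∅ := by
      ext y
      simp only [Set.mem_setOf_eq, Set.mem_empty_iff_false, iff_false]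
      rintro ⟨h1, h2, h3, h4, h5, h6, h7⟩
      exact hx ⟨h2, h4⟩
    rw [this]
    simp

/-- `r2`'s partition is coarser than `r1`'s (on `s`). -/
def Refines (s : Finset α) (r1 r2 : α → α) : Prop :=
  ∀ x ∈ s, ∀ y ∈ s, r1 x = r1 y → r2 x = r2 y

lemma refines_rep {s : Finset α} {r rc : α → α} (hr : Good s r)
    (h : Refines s r rc) {u : α} (hu : u ∈ s) : rc (r u) = rc u :=
  h (r u) (hr.1 u hu) u hu (hr.2.1 u)

/-- The sandwich counting lemma. -/
lemma mixed_card_sandwich (Γ : SimpleGraph α) (s : Finset α) {rf rc r : α → α} {M d : ℕ}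
    (hgf : Good s rf) (hgr : Good s r)
    (h1 : Refines s rf r) (h2 : Refines s r rc)
    (hblow : ∀ p ∈ s, ((s.image rf).filter (fun w => rc w = rc p)).card ≤ M)
    (hmix : ∀ p ∈ s, (mixedNbrs Γ s rc p).card ≤ d) :
    ∀ p ∈ s, (mixedNbrs Γ s r p).card ≤ M * (d + 1) := by
  intro p hp
  set N := mixedNbrs Γ s r p with hN
  have hfc : Refines s rf rc := fun x hx y hy hxy => h2 x hx y hy (h1 x hx y hy hxy)
  have hNs : ∀ q ∈ N, q ∈ s ∧ r q = q := by
    intro q hq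
    exact good_mem_image hgr (mem_filter.1 hq).1
  have hfiber : ∀ z ∈ N.image rc, (N.filter (fun q' => rc q' = z)).card ≤ M := by
    intro z hz
    obtain ⟨q0, hq0, rfl⟩ := mem_image.1 hz
    have hq0s := hNs q0 hq0
    refine le_trans (Finset.card_le_card_of_injOn rf ?_ ?_) (hblow q0 hq0s.1)
    · intro q hq
      obtain ⟨hqN, hqz⟩ := mem_filter.1 hq
      have hqs := hNs q hqN
      refine mem_filter.2 ⟨mem_image_of_mem rf hqs.1, ?_⟩
      rw [refines_rep hgf hfc hqs.1, hqz]
    · intro q hq q' hq' he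
      have hqs := hNs (q) (Finset.mem_coe.1 hq |> mem_filter.1 |>.1)
      have hq's := hNs (q') (Finset.mem_coe.1 hq' |> mem_filter.1 |>.1)
      have := h1 q hqs.1 q' hq's.1 he
      rw [hqs.2, hq's.2] at this
      exact this
  have himage : N.image rc ⊆ insert (rc p) (mixedNbrs Γ s rc p) := by
    intro z hz
    obtain ⟨q, hq, rfl⟩ := mem_image.1 hz
    obtain ⟨hqim, hqne, hqmix⟩ := mem_filter.1 hq
    have hqs := good_mem_image hgr hqim
    by_cases hzz : rc q = rc p
    · rw [hzz]; exact mem_insert_self _ _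
    · refine mem_insert_of_mem (mem_filter.2 ⟨mem_image_of_mem rc hqs.1, hzz, ?_, ?_⟩)
      · refine hqmix.1.mono ?_ ?_
        · intro x hx
          obtain ⟨hxs, hxc⟩ := mem_filter.1 hx
          exact mem_filter.2 ⟨hxs, h2 x hxs p hp hxc⟩
        · intro x hx
          obtain ⟨hxs, hxc⟩ := mem_filter.1 hx
          exact mem_filter.2 ⟨hxs, h2 x hxs q hqs.1 (by rw [hqs.2]; exact hxc)⟩
      · intro hc
        refine hqmix.2 (hc.mono ?_ ?_)
        · intro x hx
          obtain ⟨hxs, hxc⟩ := mem_filter.1 hx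
          exact mem_filter.2 ⟨hxs, h2 x hxs p hp hxc⟩
        · intro x hx
          obtain ⟨hxs, hxc⟩ := mem_filter.1 hx
          exact mem_filter.2 ⟨hxs, h2 x hxs q hqs.1 (by rw [hqs.2]; exact hxc)⟩
  calc N.card ≤ M * (N.image rc).card := Finset.card_le_mul_card_image (f := rc) N M hfiber
    _ ≤ M * (d + 1) := by
        refine Nat.mul_le_mul_left M ?_
        calc (N.image rc).card ≤ (insert (rc p) (mixedNbrs Γ s rc p)).card :=
              Finset.card_le_card himage
          _ ≤ (mixedNbrs Γ s rc p).card + 1 := card_insert_le _ _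
          _ ≤ d + 1 := by
              have := hmix p hp
              omega

/-- The abstract recursion: from an invariant `P` guaranteeing bounded red degree and
the existence of a valid merge, we get a `d`-sequence. -/
lemma hasSeq_rec (Γ : SimpleGraph α) (s : Finset α) (d : ℕ) (P : (α → α) → Prop)
    (hPg : ∀ r, P r → Good s r)
    (hdeg : ∀ r, P r → Trigraph.RedDegLE (Qt Γ s r) d)
    (hprog : ∀ r, P r → 2 ≤ ((Qt Γ s r).verts).card →
      ∃ p q, p ∈ s ∧ q ∈ s ∧ r p = p ∧ r q = q ∧ p ≠ q ∧ P (mg r p q)) :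
    ∀ n r, P r → ((Qt Γ s r).verts).card = n → (Qt Γ s r).HasSeq d := by
  intro n
  induction n using Nat.strong_induction_on with
  | _ n ih =>
    intro r hPr hcard
    by_cases hn : n ≤ 1
    · refine ⟨fun _ => Qt Γ s r, rfl, ?_, ?_⟩
      · intro i h1 h2; rw [hcard] at h2; omega
      · intro i _ _; exact hdeg r hPr
    · push_neg at hn
      obtain ⟨p, q, hp, hq, hrp, hrq, hpq, hP'⟩ := hprog r hPr (by omega)
      have hca := isContractionAt_Qt Γ (hPg r hPr) hp hq hrp hrq hpq
      have hqv : q ∈ (Qt Γ s r).verts := mem_filter.2 ⟨hq, hrq⟩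
      have hcard' : ((Qt Γ s (mg r p q)).verts).card = n - 1 := by
        rw [hca.2.2.2.1, card_erase_of_mem hqv, hcard]
      obtain ⟨f', hf0, hfc, hfd⟩ := ih (n - 1) (by omega) (mg r p q) hP' hcard'
      rw [hcard'] at hf0 hfc hfd
      refine ⟨fun i => if i = n then Qt Γ s r else f' i, ?_, ?_, ?_⟩
      · rw [hcard]; simp
      · intro i h1 h2
        rw [hcard] at h2
        dsimp only
        by_cases hi : i = n - 1
        · have hin : i + 1 = n := by omega
          rw [hin, if_pos rfl, if_neg (by omega), hi, hf0]
          exact ⟨p, q, hca⟩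
        · rw [if_neg (by omega), if_neg (by omega)]
          exact hfc i h1 (by omega)
      · intro i h1 h2
        rw [hcard] at h2
        dsimp only
        by_cases hi : i = n
        · rw [if_pos hi]; exact hdeg r hPr
        · rw [if_neg hi]; exact hfd i h1 (by omega)

/-- The sandwich invariant for a milestone chain. -/
def Sandw (s : Finset α) (R : ℕ → α → α) (m : ℕ) (r : α → α) : Prop :=
  Good s r ∧ ∃ j, j + 1 ≤ m ∧ Refines s (R j) r ∧ Refines s r (R (j + 1))

lemma sandw_progress {s : Finset α} {R : ℕ → α → α} {m : ℕ}
    (hlast : ∀ x ∈ s, ∀ y ∈ s, R m x = R m y)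
    (hcoar : ∀ j, j + 1 ≤ m → Refines s (R j) (R (j + 1))) :
    ∀ r, Sandw s R m r → 2 ≤ (s.filter (fun x => r x = x)).card →
      ∃ p q, p ∈ s ∧ q ∈ s ∧ r p = p ∧ r q = q ∧ p ≠ q ∧ Sandw s R m (mg r p q) := by
  have key : ∀ c j r, Good s r → j + 1 ≤ m → m - j ≤ c → Refines s (R j) r →
      Refines s r (R (j + 1)) → 2 ≤ (s.filter (fun x => r x = x)).card →
      ∃ p q, p ∈ s ∧ q ∈ s ∧ r p = p ∧ r q = q ∧ p ≠ q ∧ Sandw s R m (mg r p q) := by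
    intro c
    induction c with
    | zero => intro j r _ hj hc; omega
    | succ c ih =>
      intro j r hgr hj hc hRr hrR hreps
      by_cases hEq : ∀ x ∈ s, ∀ y ∈ s, R (j + 1) x = R (j + 1) y → r x = r y
      · by_cases hj2 : j + 2 ≤ m
        · refine ih (j + 1) r hgr hj2 (by omega) hEq ?_ hreps
          intro x hx y hy hxy
          exact hcoar (j + 1) hj2 x hx y hy (hrR x hx y hy hxy)
        · exfalso
          have hjm : j + 1 = m := by omega
          obtain ⟨a, ha, b, hb, hab⟩ := Finset.one_lt_card.1 hreps
          obtain ⟨has, hra⟩ := mem_filter.1 ha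
          obtain ⟨hbs, hrb⟩ := mem_filter.1 hb
          have := hEq a has b hbs (by rw [hjm]; exact hlast a has b hbs)
          rw [hra, hrb] at this
          exact hab this
      · push_neg at hEq
        obtain ⟨x, hx, y, hy, hxy, hne⟩ := hEq
        refine ⟨r x, r y, hgr.1 x hx, hgr.1 y hy, hgr.2.1 x, hgr.2.1 y, hne, ?_⟩
        have hrxs := hgr.1 x hx
        have hrys := hgr.1 y hy
        refine ⟨mg_good hgr (hgr.1 x hx) (hgr.2.1 x) (hgr.1 y hy) hne, j, hj, ?_, ?_⟩
        · intro u hu v hv huv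
          have : r u = r v := hRr u hu v hv huv
          show mg r (r x) (r y) u = mg r (r x) (r y) v
          rw [mg_apply, mg_apply, this]
        · intro u hu v hv huv
          have hrep : ∀ w, w ∈ s → R (j + 1) (r w) = R (j + 1) w :=
            fun w hw => hrR (r w) (hgr.1 w hw) w hw (hgr.2.1 w)
          rw [mg_apply, mg_apply] at huv
          by_cases hu' : r u = r y <;> by_cases hv' : r v = r y
          · calc R (j+1) u = R (j+1) (r u) := (hrep u hu).symm
              _ = R (j+1) (r v) := by rw [hu', hv']
              _ = R (j+1) v := hrep v hv
          · rw [if_pos hu', if_neg hv'] at huv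
            -- r v = r x
            calc R (j+1) u = R (j+1) (r u) := (hrep u hu).symm
              _ = R (j+1) (r y) := by rw [hu']
              _ = R (j+1) y := hrep y hy
              _ = R (j+1) x := hxy.symm
              _ = R (j+1) (r x) := (hrep x hx).symm
              _ = R (j+1) (r v) := by rw [huv]
              _ = R (j+1) v := hrep v hv
          · rw [if_neg hu', if_pos hv'] at huv
            calc R (j+1) u = R (j+1) (r u) := (hrep u hu).symm
              _ = R (j+1) (r x) := by rw [huv]
              _ = R (j+1) x := hrep x hx
              _ = R (j+1) y := hxy
              _ = R (j+1) (r y) := (hrep y hy).symm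
              _ = R (j+1) (r v) := by rw [hv']
              _ = R (j+1) v := hrep v hv
          · rw [if_neg hu', if_neg hv'] at huv
            calc R (j+1) u = R (j+1) (r u) := (hrep u hu).symm
              _ = R (j+1) (r v) := by rw [huv]
              _ = R (j+1) v := hrep v hv
  intro r hr hreps
  obtain ⟨hgr, j, hj, h1, h2⟩ := hr
  exact key (m - j) j r hgr hj le_rfl h1 h2 hreps

/-- Main engine: a milestone chain yields a contraction sequence. -/
theorem hasSeq_of_milestones (Γ : SimpleGraph α) (s : Finset α) (m M d : ℕ)
    (R : ℕ → α → α)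
    (hgood : ∀ j, Good s (R j))
    (h0 : R 0 = id)
    (hm : 1 ≤ m)
    (hlast : ∀ x ∈ s, ∀ y ∈ s, R m x = R m y)
    (hcoar : ∀ j, j + 1 ≤ m → Refines s (R j) (R (j + 1)))
    (hblow : ∀ j, j + 1 ≤ m → ∀ p ∈ s,
      ((s.image (R j)).filter (fun w => R (j + 1) w = R (j + 1) p)).card ≤ M)
    (hmix : ∀ j, j ≤ m → ∀ p ∈ s, (mixedNbrs Γ s (R j) p).card ≤ d) :
    (Γ.toTrigraphOn s).HasSeq (M * (d + 1)) := by
  rw [← Qt_id]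
  refine hasSeq_rec Γ s (M * (d + 1)) (Sandw s R m) (fun r hr => hr.1) ?_ ?_
    ((Qt Γ s id).verts).card id ?_ rfl
  · rintro r ⟨hgr, j, hj, h1, h2⟩
    refine redDegLE_of_mixed hgr ?_
    exact mixed_card_sandwich Γ s (hgood j) hgr h1 h2
      (hblow j hj) (hmix (j + 1) hj)
  · intro r hr hc
    exact sandw_progress hlast hcoar r hr hc
  · refine ⟨good_id s, 0, hm, ?_, ?_⟩
    · intro x hx y hy h
      rw [h0] at h; exact h
    · intro x hx y hy h
      simp only [id_eq] at h; rw [h]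

/-! ### Generic existence of a sequence, and extraction of a chain from a sequence -/

lemma clF_id {s : Finset α} {p : α} (hp : p ∈ s) : clF s (id : α → α) p = {p} := by
  ext y
  simp only [clF, mem_filter, id_eq, mem_singleton]
  exact ⟨fun h => h.2, fun h => ⟨h ▸ hp, h⟩⟩

lemma hasSeq_generic (Γ : SimpleGraph α) (s : Finset α) :
    (Γ.toTrigraphOn s).HasSeq (s.card * (0 + 1)) := by
  classical
  refine hasSeq_of_milestones Γ s 1 s.card 0
    (fun j x => if j = 0 then x else if h : s.Nonempty then (if x ∈ s then h.choose else x) else x)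
    ?_ ?_ le_rfl ?_ ?_ ?_ ?_
  · intro j
    by_cases hj : j = 0
    · simp only [hj, if_pos rfl]
      exact good_id s
    · simp only [if_neg hj]
      by_cases hs : s.Nonempty
      · refine ⟨fun x hx => ?_, fun x => ?_, fun x hx => ?_⟩
        · simp only [dif_pos hs, if_pos hx]
          exact hs.choose_spec
        · by_cases hx : x ∈ s
          · simp [dif_pos hs, if_pos hx, hs.choose_spec]
          · simp [dif_pos hs, if_neg hx]
        · simp [dif_pos hs, if_neg hx]
      · simp only [dif_neg hs]
        exact good_id s
  · funext x; simp
  · intro x hx y hy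
    have hs : s.Nonempty := ⟨x, hx⟩
    simp [dif_pos hs, if_pos hx, if_pos hy]
  · intro j hj
    have hj0 : j = 0 := by omega
    subst hj0
    intro x hx y hy h
    have hs : s.Nonempty := ⟨x, hx⟩
    show (if (1:ℕ) = 0 then x else if h : s.Nonempty then (if x ∈ s then h.choose else x) else x)
      = (if (1:ℕ) = 0 then y else if h : s.Nonempty then (if y ∈ s then h.choose else y) else y)
    rw [if_neg one_ne_zero, if_neg one_ne_zero, dif_pos hs, dif_pos hs, if_pos hx, if_pos hy]
  · intro j hj p hp
    refine le_trans (Finset.card_le_card (filter_subset _ _)) ?_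
    refine le_trans (Finset.card_image_le) le_rfl
  · intro j hj p hp
    interval_cases j
    · simp only [if_pos rfl]
      have : mixedNbrs Γ s (fun x => x) p = ∅ := by
        rw [eq_empty_iff_forall_notMem]
        intro w hw
        obtain ⟨hwim, hne, hmix⟩ := mem_filter.1 hw
        have hws : w ∈ s := by
          obtain ⟨x, hx, rfl⟩ := mem_image.1 hwim
          exact hx
        have h1 : clF s (fun x => x) p = {p} := clF_id hp
        have h2 : clF s (fun x => x) w = {w} := clF_id hws
        rw [h1, h2] at hmix
        exact not_mixedP_singleton Γ p w hmix
      simp [this]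
    · simp only [Nat.one_ne_zero, if_neg]
      have hs : s.Nonempty := ⟨p, hp⟩
      have : mixedNbrs Γ s
          (fun x => if h : s.Nonempty then (if x ∈ s then h.choose else x) else x) p = ∅ := by
        rw [eq_empty_iff_forall_notMem]
        intro w hw
        obtain ⟨hwim, hne, _⟩ := mem_filter.1 hw
        apply hne
        obtain ⟨x, hx, rfl⟩ := mem_image.1 hwim
        simp [dif_pos hs, if_pos hx, if_pos hp]
      simp [this]

lemma hasSeq_mono {G : Trigraph α} {d d' : ℕ} (h : G.HasSeq d) (hdd : d ≤ d') :
    G.HasSeq d' := by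
  obtain ⟨f, h0, hc, hd⟩ := h
  exact ⟨f, h0, hc, fun i h1 h2 x => le_trans (hd i h1 h2 x) hdd⟩

lemma hasSeq_of_tww_le (Γ : SimpleGraph α) (s : Finset α) {a : ℕ}
    (h : (Γ.toTrigraphOn s).tww ≤ a) : (Γ.toTrigraphOn s).HasSeq a := by
  have hne : {d | (Γ.toTrigraphOn s).HasSeq d}.Nonempty := ⟨_, hasSeq_generic Γ s⟩
  exact hasSeq_mono (Nat.sInf_mem hne) h

/-- Extraction of a merge chain from a contraction sequence of a simple graph. -/
lemma exists_chain {β : Type*} [Fintype β] [DecidableEq β] (G : SimpleGraph β) (a : ℕ)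
    (h : G.toTrigraph.HasSeq a) :
    ∃ ρ : ℕ → β → β,
      ρ 0 = id ∧
      (∀ k, Good (univ : Finset β) (ρ k)) ∧
      (∀ k, k + 1 ≤ (univ : Finset β).card - 1 → ∃ p q, ρ k p = p ∧ ρ k q = q ∧ p ≠ q ∧
          ρ (k + 1) = mg (ρ k) p q) ∧
      (∀ k, (univ : Finset β).card - 1 ≤ k → ρ k = ρ ((univ : Finset β).card - 1)) ∧
      (∀ k, k ≤ (univ : Finset β).card - 1 → ∀ p ∈ (univ : Finset β),
          (mixedNbrs G univ (ρ k) p).card ≤ a) ∧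
      (∀ x y : β, ρ ((univ : Finset β).card - 1) x = ρ ((univ : Finset β).card - 1) y) := by
  classical
  set n := (univ : Finset β).card with hn
  obtain ⟨f, hf0, hfc, hfd⟩ := h
  have hvertsG : G.toTrigraph.verts = (univ : Finset β) := rfl
  rw [hvertsG] at hf0 hfc hfd
  have hstep : ∀ k, k + 1 ≤ n - 1 →
      Trigraph.IsContraction (f (n - k)) (f (n - k - 1)) := by
    intro k hk
    have h1 : 1 ≤ n - k - 1 := by omega
    have h2 : n - k - 1 < n := by omega
    have h3 : n - k - 1 + 1 = n - k := by omega
    have := hfc (n - k - 1) h1 h2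
    rw [h3] at this
    exact this
  set ρ : ℕ → β → β := fun k => Nat.rec (motive := fun _ => β → β) id
    (fun k prev => if h : k + 1 ≤ n - 1 then
      mg prev (hstep k h).choose (hstep k h).choose_spec.choose else prev) k with hρ
  have hρ0 : ρ 0 = id := rfl
  have hρsucc : ∀ k, ρ (k + 1) = if h : k + 1 ≤ n - 1 then
      mg (ρ k) (hstep k h).choose (hstep k h).choose_spec.choose else ρ k := fun k => rfl
  -- The invariant
  have main : ∀ k, k ≤ n - 1 →
      ((f (n - k)).verts = univ.filter (fun x => ρ k x = x)) ∧
      (∀ p q, (f (n - k)).black p q →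
        Compl G (clF univ (ρ k) p) (clF univ (ρ k) q)) ∧
      (∀ p q, p ≠ q → ρ k p = p → ρ k q = q → ¬ (f (n - k)).black p q →
        ¬ (f (n - k)).red p q → ¬ HasE G (clF univ (ρ k) p) (clF univ (ρ k) q)) ∧
      Good (univ : Finset β) (ρ k) ∧
      (univ.filter (fun x => ρ k x = x)).card = n - k := by
    intro k
    induction k with
    | zero =>
      intro _
      rw [Nat.sub_zero, hf0, hρ0]
      have hft : univ.filter (fun x => (id : β → β) x = x) = univ :=
        filter_true_of_mem (fun _ _ => rfl)
      refine ⟨?_, ?_, ?_, good_id univ, ?_⟩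
      · rw [hft]; rfl
      · rintro p q ⟨hadj, _, _⟩
        rw [clF_id (mem_univ p), clF_id (mem_univ q)]
        intro x hx y hy
        rw [mem_singleton] at hx hy
        subst hx; subst hy
        exact hadj
      · intro p q hpq _ _ hnb _
        rw [clF_id (mem_univ p), clF_id (mem_univ q)]
        rintro ⟨x, hx, y, hy, hadj⟩
        rw [mem_singleton] at hx hy
        subst hx; subst hy
        exact hnb ⟨hadj, mem_univ x, mem_univ y⟩
      · rw [hft, hn]
    | succ k ih =>
      intro hk1
      have hk : k + 1 ≤ n - 1 := hk1
      obtain ⟨ha, hb, hc, hg, he⟩ := ih (by omega)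
      set u := (hstep k hk).choose with hu
      have hca : Trigraph.IsContractionAt (f (n - k)) (f (n - k - 1)) u
          (hstep k hk).choose_spec.choose := (hstep k hk).choose_spec.choose_spec
      set v := (hstep k hk).choose_spec.choose with hv
      have hρk1 : ρ (k + 1) = mg (ρ k) u v := by
        rw [hρsucc k, dif_pos hk]
      obtain ⟨huv, hvv, huvne, hverts, hbk, hrd, hbku, hrdu⟩ := hca
      rw [ha] at huv hvv
      have hus : ρ k u = u := (mem_filter.1 huv).2
      have hvs : ρ k v = v := (mem_filter.1 hvv).2
      have hfix := mg_fix_iff (s := (univ : Finset β)) (r := ρ k) hg hus huvne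
      have hnk1 : n - (k + 1) = n - k - 1 := by omega
      rw [hnk1]
      have hverts' : (f (n - k - 1)).verts = univ.filter (fun x => ρ (k + 1) x = x) := by
        rw [hverts, ha]
        ext x
        simp only [mem_erase, mem_filter, hρk1]
        rw [hfix x]
        tauto
      have hclnew : ∀ x, u ≠ x → v ≠ x →
          clF univ (ρ (k + 1)) x = clF univ (ρ k) x := by
        intro x h1 h2
        rw [hρk1]
        exact clF_mg_of_ne h1 h2
      have hclu : clF univ (ρ (k + 1)) u = clF univ (ρ k) u ∪ clF univ (ρ k) v := by
        rw [hρk1]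
        exact clF_mg_self huvne
      refine ⟨hverts', ?_, ?_, ?_, ?_⟩
      · -- black implies complete
        intro p q hbpq
        have hmem := (f (n - k - 1)).black_mem p q hbpq
        have hpv : p ≠ v := by
          intro he'
          have := hmem.1
          rw [hverts, he'] at this
          exact (mem_erase.1 this).1 rfl
        have hqv : q ≠ v := by
          intro he'
          have := hmem.2
          rw [hverts, he'] at this
          exact (mem_erase.1 this).1 rfl
        have hpq : p ≠ q := by
          intro he'
          subst he'
          exact (f (n - k - 1)).black_irrefl p hbpq
        by_cases hpu : p = u
        · subst hpu
          have hqu : q ≠ u := fun he' => hpq he'.symm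
          have := (hbku q (fun he' => hqu he') hqv).1 hbpq
          rw [hclu, hclnew q (Ne.symm hqu) (Ne.symm hqv), compl_union_left]
          exact ⟨hb _ _ this.1, hb _ _ this.2⟩
        · by_cases hqu : q = u
          · subst hqu
            have hbqp := (f (n - k - 1)).black_symm p u hbpq
            have := (hbku p (fun he' => hpu he') hpv).1 hbqp
            rw [hclu, hclnew p (Ne.symm (fun he' => hpu he')) (Ne.symm hpv)]
            refine Compl.symm ?_
            rw [compl_union_left]
            exact ⟨hb _ _ this.1, hb _ _ this.2⟩
          · have := (hbk p q hpu hqu).1 hbpq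
            rw [hclnew p (fun he' => hpu he'.symm) (fun he' => hpv he'.symm),
              hclnew q (fun he' => hqu he'.symm) (fun he' => hqv he'.symm)]
            exact hb _ _ this.1
      · -- no relation implies no edge
        intro p q hpq hrp hrq hnb hnr
        have hpv : p ≠ v := by
          intro he'
          subst he'
          rw [hρk1] at hrp
          rw [mg_apply, if_pos hvs] at hrp
          exact huvne hrp
        have hqv : q ≠ v := by
          intro he'
          subst he'
          rw [hρk1] at hrq
          rw [mg_apply, if_pos hvs] at hrq
          exact huvne hrq
        have hrp' : ρ k p = p := by
          rw [hρk1] at hrp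
          exact ((hfix p).1 hrp).1
        have hrq' : ρ k q = q := by
          rw [hρk1] at hrq
          exact ((hfix q).1 hrq).1
        by_cases hpu : p = u
        · subst hpu
          have hqu : q ≠ u := fun he' => hpq he'.symm
          have h8 := hrdu q (fun he' => hqu he') hqv
          have h7 := hbku q (fun he' => hqu he') hqv
          have hnotany : ¬ ((f (n-k)).black u q ∨ (f (n-k)).red u q ∨
              (f (n-k)).black v q ∨ (f (n-k)).red v q) := by
            intro hany
            by_cases hbb : (f (n-k)).black u q ∧ (f (n-k)).black v q
            · exact hnb (h7.2 hbb)
            · exact hnr (h8.2 ⟨hany, hbb⟩)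
          push_neg at hnotany
          obtain ⟨hn1, hn2, hn3, hn4⟩ := hnotany
          rw [hclu, hclnew q (Ne.symm hqu) (Ne.symm hqv), hasE_union_left]
          rintro (he' | he')
          · exact hc u q hpq hus hrq' hn1 hn2 he'
          · exact hc v q (fun he2 => hqv he2.symm) hvs hrq' hn3 hn4 he'
        · by_cases hqu : q = u
          · subst hqu
            have h8 := hrdu p (fun he' => hpu he') hpv
            have h7 := hbku p (fun he' => hpu he') hpv
            have hnb' : ¬ (f (n - k - 1)).black u p := fun he' =>
              hnb ((f (n - k - 1)).black_symm u p he')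
            have hnr' : ¬ (f (n - k - 1)).red u p := fun he' =>
              hnr ((f (n - k - 1)).red_symm u p he')
            have hnotany : ¬ ((f (n-k)).black u p ∨ (f (n-k)).red u p ∨
                (f (n-k)).black v p ∨ (f (n-k)).red v p) := by
              intro hany
              by_cases hbb : (f (n-k)).black u p ∧ (f (n-k)).black v p
              · exact hnb' (h7.2 hbb)
              · exact hnr' (h8.2 ⟨hany, hbb⟩)
            push_neg at hnotany
            obtain ⟨hn1, hn2, hn3, hn4⟩ := hnotany
            intro he'
            have he'' := he'.symm
            rw [hclu, hclnew p (Ne.symm (fun he' => hpu he')) (Ne.symm hpv), hasE_union_left] at he''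
            rcases he'' with he2 | he2
            · exact hc u p (fun h3 => hpq h3.symm) hus hrp' hn1 hn2 he2
            · exact hc v p (fun h3 => hpv h3.symm) hvs hrp' hn3 hn4 he2
          · have h5 := hbk p q hpu hqu
            have h6 := hrd p q hpu hqu
            rw [hclnew p (fun he' => hpu he'.symm) (fun he' => hpv he'.symm),
              hclnew q (fun he' => hqu he'.symm) (fun he' => hqv he'.symm)]
            refine hc p q hpq hrp' hrq' ?_ ?_
            · intro hb'
              exact hnb (h5.2 ⟨hb', hpv, hqv⟩)
            · intro hr'
              exact hnr (h6.2 ⟨hr', hpv, hqv⟩)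
      · rw [hρk1]
        exact mg_good hg (mem_univ u) hus (mem_univ v) huvne
      · have hvmem : v ∈ (f (n - k)).verts := by rw [ha]; exact hvv
        have : univ.filter (fun x => ρ (k+1) x = x) = (f (n - k - 1)).verts := hverts'.symm
        rw [this, hverts, card_erase_of_mem hvmem, ha, he]
  refine ⟨ρ, hρ0, ?_, ?_, ?_, ?_, ?_⟩
  · -- goodness for all k
    intro k
    induction k with
    | zero => exact good_id univ
    | succ k ihg =>
      rw [hρsucc k]
      by_cases h' : k + 1 ≤ n - 1
      · rw [dif_pos h']
        obtain ⟨_, _, _, hg, _⟩ := main k (by omega)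
        have hca := (hstep k h').choose_spec.choose_spec
        obtain ⟨huv, hvv, huvne, _, _, _, _, _⟩ := hca
        rw [(main k (by omega)).1] at huv
        exact mg_good hg (mem_univ _) (mem_filter.1 huv).2 (mem_univ _) huvne
      · rw [dif_neg h']
        exact ihg
  · -- step structure
    intro k hk
    refine ⟨(hstep k hk).choose, (hstep k hk).choose_spec.choose, ?_, ?_, ?_, ?_⟩
    · have hca := (hstep k hk).choose_spec.choose_spec
      have := hca.1
      rw [(main k (by omega)).1] at this
      exact (mem_filter.1 this).2
    · have hca := (hstep k hk).choose_spec.choose_spec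
      have := hca.2.1
      rw [(main k (by omega)).1] at this
      exact (mem_filter.1 this).2
    · exact (hstep k hk).choose_spec.choose_spec.2.2.1
    · rw [hρsucc k, dif_pos hk]
  · -- stabilization
    intro k hk
    induction k with
    | zero =>
      have : n - 1 = 0 := by omega
      rw [this]
    | succ k ihs =>
      by_cases h' : k + 1 = n - 1
      · rw [h']
      · have h'' : ¬ (k + 1 ≤ n - 1) := by omega
        rw [hρsucc k, dif_neg h'']
        exact ihs (by omega)
  · -- mixed degree bound
    intro k hk p hp
    obtain ⟨ha, hb, hc, hg, he⟩ := main k hk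
    by_cases hn0 : n = 0
    · exfalso
      have : (univ : Finset β).card = 0 := hn0
      rw [Finset.card_eq_zero] at this
      rw [this] at hp
      exact notMem_empty p hp
    · have hsub : mixedNbrs G univ (ρ k) p ⊆
          univ.filter (fun w => (f (n - k)).red (ρ k p) w) := by
        intro w hw
        obtain ⟨hwim, hwne, hwmix⟩ := mem_filter.1 hw
        obtain ⟨hws, hwrep⟩ := good_mem_image hg hwim
        refine mem_filter.2 ⟨mem_univ w, ?_⟩
        by_contra hnr
        by_cases hbl : (f (n - k)).black (ρ k p) w
        · exact hwmix.2 (hb _ _ hbl)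
        · exact hc (ρ k p) w (fun he' => hwne he'.symm) (hg.2.1 p) hwrep hbl hnr hwmix.1
      have hset : {y | (f (n - k)).red (ρ k p) y} =
          ↑(univ.filter (fun w => (f (n - k)).red (ρ k p) w)) := by
        ext y
        simp
      calc (mixedNbrs G univ (ρ k) p).card
          ≤ (univ.filter (fun w => (f (n - k)).red (ρ k p) w)).card :=
            Finset.card_le_card hsub
        _ = {y | (f (n - k)).red (ρ k p) y}.ncard := by rw [hset, Set.ncard_coe_finset]
        _ = (f (n - k)).redDeg (ρ k p) := rfl
        _ ≤ a := hfd (n - k) (by omega) (by omega) (ρ k p)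
  · -- single class at the end
    intro x y
    obtain ⟨_, _, _, hg, he⟩ := main (n - 1) le_rfl
    by_cases hn0 : n = 0
    · exfalso
      have huniv : (univ : Finset β) = ∅ := Finset.card_eq_zero.1 hn0
      exact absurd (mem_univ x) (by rw [huniv]; exact notMem_empty x)
    · have hcard1 : (univ.filter (fun z => ρ (n - 1) z = z)).card ≤ 1 := by
        rw [he]; omega
      have hx : ρ (n - 1) x ∈ univ.filter (fun z => ρ (n - 1) z = z) :=
        mem_filter.2 ⟨mem_univ _, hg.2.1 x⟩
      have hy : ρ (n - 1) y ∈ univ.filter (fun z => ρ (n - 1) z = z) :=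
        mem_filter.2 ⟨mem_univ _, hg.2.1 y⟩
      exact Finset.card_le_one.1 hcard1 _ hx _ hy

/-! ### The milestone chain for a strong product -/

section Product

variable {V W : Type*} [Fintype V] [Fintype W] [DecidableEq V] [DecidableEq W]

lemma strongProd_adj (G : SimpleGraph V) (H : SimpleGraph W) {x y : V × W} :
    (strongProd G H).Adj x y ↔
      x ≠ y ∧ (x.1 = y.1 ∨ G.Adj x.1 y.1) ∧ (x.2 = y.2 ∨ H.Adj x.2 y.2) := Iff.rfl

lemma deg_le_of_maxDeg {H : SimpleGraph W} {D : ℕ} (hD : maxDeg H ≤ D) (w : W) :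
    (univ.filter (fun u => H.Adj w u)).card ≤ D := by
  have hset : {u | H.Adj w u} = ↑(univ.filter (fun u => H.Adj w u)) := by
    ext u; simp
  have h1 : {u | H.Adj w u}.ncard ≤ maxDeg H :=
    Finset.le_sup (f := fun v => {u | H.Adj v u}.ncard) (mem_univ w)
  rw [hset, Set.ncard_coe_finset] at h1
  omega

lemma product_chain (G : SimpleGraph V) (H : SimpleGraph W) {a b D : ℕ}
    (hG : Trigraph.tww G.toTrigraph ≤ a) (hH : Trigraph.tww H.toTrigraph ≤ b)
    (hD : maxDeg H ≤ D) :
    ∃ (mK : ℕ) (RK : ℕ → V × W → V × W),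
      (∀ j, Good (univ : Finset (V × W)) (RK j)) ∧
      RK 0 = id ∧
      (∀ x y : V × W, RK mK x = RK mK y) ∧
      (∀ j, j + 1 ≤ mK → Refines univ (RK j) (RK (j + 1))) ∧
      (∀ j, j + 1 ≤ mK → ∀ p ∈ (univ : Finset (V × W)),
        ((univ.image (RK j)).filter (fun w => RK (j + 1) w = RK (j + 1) p)).card ≤ 2) ∧
      (∀ j, j ≤ mK → ∀ p ∈ (univ : Finset (V × W)),
        (mixedNbrs (strongProd G H) univ (RK j) p).card ≤ max ((a + 1) * (D + 1)) (b + D)) := by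
  classical
  obtain ⟨ρG, hG0, hGgood, hGstep, hGstab, hGmix, hGone⟩ :=
    exists_chain G a (hasSeq_of_tww_le G univ hG)
  obtain ⟨ρH, hH0, hHgood, hHstep, hHstab, hHmix, hHone⟩ :=
    exists_chain H b (hasSeq_of_tww_le H univ hH)
  set nV := (univ : Finset V).card with hnV
  set nH := (univ : Finset W).card with hnH
  set mK := (nV - 1) + (nH - 1) with hmK
  set RK : ℕ → V × W → V × W := fun j z =>
    if j ≤ nV - 1 then (ρG j z.1, z.2) else (ρG (nV - 1) z.1, ρH (j - (nV - 1)) z.2) with hRK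
  have hRKA : ∀ j, j ≤ nV - 1 → RK j = fun z => (ρG j z.1, z.2) := by
    intro j hj; funext z; simp only [hRK, if_pos hj]
  have hRKB : ∀ j, nV - 1 ≤ j → RK j = fun z =>
      (ρG (nV - 1) z.1, ρH (j - (nV - 1)) z.2) := by
    intro j hj
    by_cases hj' : j ≤ nV - 1
    · have hje : j = nV - 1 := le_antisymm hj' hj
      subst hje
      funext z
      simp only [hRK, if_pos le_rfl, Nat.sub_self, hH0, id_eq]
    · funext z
      simp only [hRK, if_neg hj']
  have hgood : ∀ j, Good (univ : Finset (V × W)) (RK j) := by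
    intro j
    refine ⟨fun x _ => mem_univ _, fun z => ?_, fun x hx => absurd (mem_univ x) hx⟩
    by_cases hj : j ≤ nV - 1
    · rw [hRKA j hj]
      simp only
      rw [(hGgood j).2.1]
    · rw [hRKB j (by omega)]
      simp only
      rw [(hGgood (nV - 1)).2.1, (hHgood (j - (nV - 1))).2.1]
  refine ⟨mK, RK, hgood, ?_, ?_, ?_, ?_, ?_⟩
  · -- RK 0 = id
    funext z
    rw [hRKA 0 (Nat.zero_le _)]
    simp only [hG0, id_eq]
  · -- single class at the end
    intro x y
    have h1 : nV - 1 ≤ mK := by omega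
    rw [hRKB mK h1]
    have h2 : mK - (nV - 1) = nH - 1 := by omega
    simp only [h2]
    rw [hGone x.1 y.1, hHone x.2 y.2]
  · -- coarsening
    intro j hj x _ y _ hxy
    by_cases hjA : j + 1 ≤ nV - 1
    · rw [hRKA j (by omega)] at hxy
      rw [hRKA (j + 1) hjA]
      obtain ⟨p, q, hp, hq, hpq, hstepeq⟩ := hGstep j hjA
      have h1 : ρG j x.1 = ρG j y.1 := by simpa using congrArg Prod.fst hxy
      have h2 : x.2 = y.2 := by simpa using congrArg Prod.snd hxy
      show (ρG (j + 1) x.1, x.2) = (ρG (j + 1) y.1, y.2)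
      rw [hstepeq, h2]
      congr 1
      rw [mg_apply, mg_apply, h1]
    · have hjB : nV - 1 ≤ j := by omega
      have hl1 : (j + 1) - (nV - 1) = (j - (nV - 1)) + 1 := by omega
      have hlstep : (j - (nV - 1)) + 1 ≤ nH - 1 := by omega
      rw [hRKB j hjB] at hxy
      rw [hRKB (j + 1) (by omega), hl1]
      obtain ⟨p, q, hp, hq, hpq, hstepeq⟩ := hHstep (j - (nV - 1)) hlstep
      have h1 : ρG (nV - 1) x.1 = ρG (nV - 1) y.1 := by simpa using congrArg Prod.fst hxy
      have h2 : ρH (j - (nV - 1)) x.2 = ρH (j - (nV - 1)) y.2 := by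
        simpa using congrArg Prod.snd hxy
      show (ρG (nV - 1) x.1, ρH ((j - (nV - 1)) + 1) x.2)
        = (ρG (nV - 1) y.1, ρH ((j - (nV - 1)) + 1) y.2)
      rw [hstepeq, h1]
      congr 1
      rw [mg_apply, mg_apply, h2]
  · -- blowup at most 2
    intro j hj p _
    by_cases hjA : j + 1 ≤ nV - 1
    · have hA : RK j = fun z => (ρG j z.1, z.2) := hRKA j (by omega)
      have hA1 : RK (j + 1) = fun z => (ρG (j + 1) z.1, z.2) := hRKA (j + 1) hjA
      obtain ⟨pp, qq, hpp, hqq, hppqq, hstepeq⟩ := hGstep j hjA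
      have hRKp1 : RK (j + 1) p = (ρG (j + 1) p.1, p.2) := by rw [hA1]
      rw [hstepeq] at hRKp1
      have hsub : (univ.image (RK j)).filter (fun w => RK (j + 1) w = RK (j + 1) p) ⊆
          insert (RK (j + 1) p) {(qq, p.2)} := by
        intro w hw
        obtain ⟨hwim, hwc⟩ := mem_filter.1 hw
        obtain ⟨z, _, hz⟩ := mem_image.1 hwim
        rw [hA] at hz
        rw [hA1] at hwc
        have h1 : ρG (j + 1) w.1 = ρG (j + 1) p.1 := by simpa using congrArg Prod.fst hwc
        have h2 : w.2 = p.2 := by simpa using congrArg Prod.snd hwc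
        have hz1 : ρG j z.1 = w.1 := by simpa using congrArg Prod.fst hz
        have hw1 : ρG j w.1 = w.1 := by rw [← hz1, (hGgood j).2.1]
        rw [hstepeq, mg_apply, hw1] at h1
        by_cases hu : w.1 = qq
        · exact mem_insert_of_mem (mem_singleton.2 (Prod.ext hu h2))
        · rw [if_neg hu] at h1
          refine mem_insert.2 (Or.inl ?_)
          rw [hRKp1]
          exact Prod.ext h1 h2
      refine le_trans (Finset.card_le_card hsub) ?_
      refine le_trans (card_insert_le _ _) ?_
      simp
    · have hjB : nV - 1 ≤ j := by omega
      have hB : RK j = fun z => (ρG (nV - 1) z.1, ρH (j - (nV - 1)) z.2) := hRKB j hjB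
      have hl1 : (j + 1) - (nV - 1) = (j - (nV - 1)) + 1 := by omega
      have hlstep : (j - (nV - 1)) + 1 ≤ nH - 1 := by omega
      have hB1 : RK (j + 1) = fun z =>
          (ρG (nV - 1) z.1, ρH ((j - (nV - 1)) + 1) z.2) := by
        rw [hRKB (j + 1) (by omega), hl1]
      obtain ⟨pp, qq, hpp, hqq, hppqq, hstepeq⟩ := hHstep (j - (nV - 1)) hlstep
      have hRKp1 : RK (j + 1) p = (ρG (nV - 1) p.1, ρH ((j - (nV - 1)) + 1) p.2) := by
        rw [hB1]
      rw [hstepeq] at hRKp1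
      have hsub : (univ.image (RK j)).filter (fun w => RK (j + 1) w = RK (j + 1) p) ⊆
          insert (RK (j + 1) p) {(ρG (nV - 1) p.1, qq)} := by
        intro w hw
        obtain ⟨hwim, hwc⟩ := mem_filter.1 hw
        obtain ⟨z, _, hz⟩ := mem_image.1 hwim
        rw [hB] at hz
        rw [hB1] at hwc
        have h1 : ρG (nV - 1) w.1 = ρG (nV - 1) p.1 := by simpa using congrArg Prod.fst hwc
        have h2 : ρH ((j - (nV - 1)) + 1) w.2 = ρH ((j - (nV - 1)) + 1) p.2 := by
          simpa using congrArg Prod.snd hwc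
        have hz1 : ρG (nV - 1) z.1 = w.1 := by simpa using congrArg Prod.fst hz
        have hz2 : ρH (j - (nV - 1)) z.2 = w.2 := by simpa using congrArg Prod.snd hz
        have hw1 : ρG (nV - 1) w.1 = w.1 := by rw [← hz1, (hGgood (nV - 1)).2.1]
        have hw2 : ρH (j - (nV - 1)) w.2 = w.2 := by rw [← hz2, (hHgood (j - (nV - 1))).2.1]
        rw [hstepeq, mg_apply, hw2] at h2
        have hwfst : w.1 = ρG (nV - 1) p.1 := by rw [← hw1, h1]
        by_cases hu : w.2 = qq
        · exact mem_insert_of_mem (mem_singleton.2 (Prod.ext hwfst hu))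
        · rw [if_neg hu] at h2
          refine mem_insert.2 (Or.inl ?_)
          rw [hRKp1]
          exact Prod.ext hwfst h2
      refine le_trans (Finset.card_le_card hsub) ?_
      refine le_trans (card_insert_le _ _) ?_
      simp
  · -- mixed degree
    intro j hj p _
    by_cases hjA : j ≤ nV - 1
    · -- phase A
      have hA : RK j = fun z => (ρG j z.1, z.2) := hRKA j hjA
      refine le_trans ?_ (le_max_left ((a + 1) * (D + 1)) (b + D))
      have hsub : mixedNbrs (strongProd G H) univ (RK j) p ⊆
          (insert (ρG j p.1) (mixedNbrs G univ (ρG j) p.1)) ×ˢ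
          (insert p.2 (univ.filter (fun u => H.Adj p.2 u))) := by
        intro w hw
        obtain ⟨hwim, hwne, hwmix⟩ := mem_filter.1 hw
        obtain ⟨x, hx, y, hy, hadj⟩ := hwmix.1
        have hx' : RK j x = RK j p := (mem_filter.1 hx).2
        have hy' : RK j y = w := (mem_filter.1 hy).2
        rw [hA] at hx' hy'
        have hx1 : ρG j x.1 = ρG j p.1 := by simpa using congrArg Prod.fst hx'
        have hx2 : x.2 = p.2 := by simpa using congrArg Prod.snd hx'
        have hy1 : ρG j y.1 = w.1 := by simpa using congrArg Prod.fst hy'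
        have hy2 : y.2 = w.2 := by simpa using congrArg Prod.snd hy'
        rw [strongProd_adj] at hadj
        have hsnd : w.2 = p.2 ∨ H.Adj p.2 w.2 := by
          rcases hadj.2.2 with h | h
          · left; rw [← hy2, ← h, hx2]
          · right; rw [← hx2, ← hy2]; exact h
        have hsndmem : w.2 ∈ insert p.2 (univ.filter (fun u => H.Adj p.2 u)) := by
          rcases hsnd with h | h
          · rw [h]; exact mem_insert_self _ _
          · exact mem_insert_of_mem (mem_filter.2 ⟨mem_univ _, h⟩)
        refine mem_product.2 ⟨?_, hsndmem⟩
        by_cases hfe : w.1 = ρG j p.1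
        · rw [hfe]; exact mem_insert_self _ _
        · refine mem_insert_of_mem (mem_filter.2 ⟨?_, hfe, ?_, ?_⟩)
          · obtain ⟨z, _, hz⟩ := mem_image.1 hwim
            rw [hA] at hz
            have hz1 : ρG j z.1 = w.1 := by simpa using congrArg Prod.fst hz
            exact mem_image.2 ⟨z.1, mem_univ _, hz1⟩
          · refine ⟨x.1, mem_filter.2 ⟨mem_univ _, hx1⟩, y.1,
              mem_filter.2 ⟨mem_univ _, hy1⟩, ?_⟩
            rcases hadj.2.1 with h | h
            · exfalso
              apply hfe
              rw [← hy1, ← h, hx1]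
            · exact h
          · intro hcg
            apply hwmix.2
            intro x' hx'' y' hy''
            have hx'c : RK j x' = RK j p := (mem_filter.1 hx'').2
            have hy'c : RK j y' = w := (mem_filter.1 hy'').2
            rw [hA] at hx'c hy'c
            have hx'1 : ρG j x'.1 = ρG j p.1 := by simpa using congrArg Prod.fst hx'c
            have hx'2 : x'.2 = p.2 := by simpa using congrArg Prod.snd hx'c
            have hy'1 : ρG j y'.1 = w.1 := by simpa using congrArg Prod.fst hy'c
            have hy'2 : y'.2 = w.2 := by simpa using congrArg Prod.snd hy'c
            have hGadj : G.Adj x'.1 y'.1 :=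
              hcg x'.1 (mem_filter.2 ⟨mem_univ _, hx'1⟩) y'.1
                (mem_filter.2 ⟨mem_univ _, hy'1⟩)
            rw [strongProd_adj]
            refine ⟨fun he => hGadj.ne (congrArg Prod.fst he), Or.inr hGadj, ?_⟩
            rw [hx'2, hy'2]
            rcases hsnd with h | h
            · exact Or.inl h.symm
            · exact Or.inr h
      refine le_trans (Finset.card_le_card hsub) ?_
      rw [Finset.card_product]
      refine Nat.mul_le_mul ?_ ?_
      · refine le_trans (card_insert_le _ _) ?_
        have := hGmix j hjA p.1 (mem_univ _)
        omega
      · refine le_trans (card_insert_le _ _) ?_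
        have := deg_le_of_maxDeg hD p.2
        omega
    · -- phase B
      have hjB : nV - 1 ≤ j := by omega
      have hlle : j - (nV - 1) ≤ nH - 1 := by omega
      have hB : RK j = fun z => (ρG (nV - 1) z.1, ρH (j - (nV - 1)) z.2) := hRKB j hjB
      refine le_trans ?_ (le_max_right ((a + 1) * (D + 1)) (b + D))
      set N := mixedNbrs (strongProd G H) univ (RK j) p with hN
      have hinj : Set.InjOn Prod.snd (N : Set (V × W)) := by
        intro w hw w' hw' he
        have h1 : w.1 = w'.1 := by
          obtain ⟨z, _, hz⟩ := mem_image.1 (mem_filter.1 (Finset.mem_coe.1 hw)).1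
          obtain ⟨z', _, hz'⟩ := mem_image.1 (mem_filter.1 (Finset.mem_coe.1 hw')).1
          rw [hB] at hz hz'
          have hz1 : ρG (nV - 1) z.1 = w.1 := by simpa using congrArg Prod.fst hz
          have hz'1 : ρG (nV - 1) z'.1 = w'.1 := by simpa using congrArg Prod.fst hz'
          rw [← hz1, ← hz'1]
          exact hGone z.1 z'.1
        exact Prod.ext h1 he
      have hcard : N.card = (N.image Prod.snd).card := (Finset.card_image_of_injOn hinj).symm
      have hsubs : N.image Prod.snd ⊆
          (mixedNbrs H univ (ρH (j - (nV - 1))) p.2) ∪ (univ.filter (fun u => H.Adj p.2 u)) := by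
        intro w2 hw2
        obtain ⟨w, hw, rfl⟩ := mem_image.1 hw2
        obtain ⟨hwim, hwne, hwmix⟩ := mem_filter.1 hw
        obtain ⟨x, hx, y, hy, hadj⟩ := hwmix.1
        have hx' : RK j x = RK j p := (mem_filter.1 hx).2
        have hy' : RK j y = w := (mem_filter.1 hy).2
        rw [hB] at hx' hy'
        have hx2 : ρH (j - (nV - 1)) x.2 = ρH (j - (nV - 1)) p.2 := by
          simpa using congrArg Prod.snd hx'
        have hy2 : ρH (j - (nV - 1)) y.2 = w.2 := by simpa using congrArg Prod.snd hy'
        have hwrep2 : ρH (j - (nV - 1)) w.2 = w.2 := by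
          obtain ⟨z, _, hz⟩ := mem_image.1 hwim
          rw [hB] at hz
          have hz2 : ρH (j - (nV - 1)) z.2 = w.2 := by simpa using congrArg Prod.snd hz
          rw [← hz2, (hHgood (j - (nV - 1))).2.1]
        have hw1 : w.1 = ρG (nV - 1) p.1 := by
          obtain ⟨z, _, hz⟩ := mem_image.1 hwim
          rw [hB] at hz
          have hz1 : ρG (nV - 1) z.1 = w.1 := by simpa using congrArg Prod.fst hz
          rw [← hz1]
          exact hGone z.1 p.1
        have hwne2 : w.2 ≠ ρH (j - (nV - 1)) p.2 := by
          intro he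
          apply hwne
          rw [hB]
          exact Prod.ext hw1 he
        have hxy2 : x.2 ≠ y.2 := by
          intro he
          apply hwne2
          rw [← hy2, ← he, hx2]
        rw [strongProd_adj] at hadj
        have hHadj : H.Adj x.2 y.2 := hadj.2.2.resolve_left hxy2
        have hHasE : HasE H (clF univ (ρH (j - (nV - 1))) (ρH (j - (nV - 1)) p.2))
            (clF univ (ρH (j - (nV - 1))) w.2) :=
          ⟨x.2, mem_filter.2 ⟨mem_univ _, hx2⟩, y.2,
            mem_filter.2 ⟨mem_univ _, hy2⟩, hHadj⟩
        by_cases hch : Compl H (clF univ (ρH (j - (nV - 1))) (ρH (j - (nV - 1)) p.2))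
            (clF univ (ρH (j - (nV - 1))) w.2)
        · refine mem_union_right _ (mem_filter.2 ⟨mem_univ _, ?_⟩)
          exact hch p.2 (mem_filter.2 ⟨mem_univ _, rfl⟩) w.2
            (mem_filter.2 ⟨mem_univ _, hwrep2⟩)
        · refine mem_union_left _ (mem_filter.2 ⟨?_, hwne2, hHasE, hch⟩)
          exact mem_image.2 ⟨w.2, mem_univ _, hwrep2⟩
      calc N.card = (N.image Prod.snd).card := hcard
        _ ≤ ((mixedNbrs H univ (ρH (j - (nV - 1))) p.2) ∪
              (univ.filter (fun u => H.Adj p.2 u))).card :=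
            Finset.card_le_card hsubs
        _ ≤ (mixedNbrs H univ (ρH (j - (nV - 1))) p.2).card
              + (univ.filter (fun u => H.Adj p.2 u)).card :=
            card_union_le _ _
        _ ≤ b + D := Nat.add_le_add (hHmix (j - (nV - 1)) hlle p.2 (mem_univ _))
            (deg_le_of_maxDeg hD p.2)

end Product

/-! ### Representative maps from colourings -/

noncomputable def pick (A : Finset α) (h : A.Nonempty) : α := h.choose

lemma pick_mem (A : Finset α) (h : A.Nonempty) : pick A h ∈ A := h.choose_spec

lemma pick_congr {A B : Finset α} (hA : A.Nonempty) (hB : B.Nonempty) (h : A = B) :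
    pick A hA = pick B hB := by subst h; rfl

noncomputable def rOf (s : Finset α) {β : Type*} (δ : α → β) (x : α) : α :=
  if h : x ∈ s then
    pick (s.filter (fun y => δ y = δ x)) ⟨x, mem_filter.2 ⟨h, rfl⟩⟩
  else x

section rOfLemmas

variable {s : Finset α} {β : Type*} {δ : α → β}

lemma rOf_spec {x : α} (hx : x ∈ s) : rOf s δ x ∈ s ∧ δ (rOf s δ x) = δ x := by
  unfold rOf
  rw [dif_pos hx]
  have := pick_mem (s.filter (fun y => δ y = δ x)) ⟨x, mem_filter.2 ⟨hx, rfl⟩⟩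
  exact ⟨(mem_filter.1 this).1, (mem_filter.1 this).2⟩

lemma rOf_congr {x y : α} (hx : x ∈ s) (hy : y ∈ s) (h : δ x = δ y) :
    rOf s δ x = rOf s δ y := by
  unfold rOf
  rw [dif_pos hx, dif_pos hy]
  exact pick_congr _ _ (by rw [h])

lemma rOf_good : Good s (rOf s δ) := by
  refine ⟨fun x hx => (rOf_spec hx).1, fun x => ?_, fun x hx => dif_neg hx⟩
  by_cases hx : x ∈ s
  · exact rOf_congr (rOf_spec hx).1 hx (rOf_spec hx).2
  · have h1 : rOf s δ x = x := dif_neg hx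
    rw [h1]; exact h1

lemma rOf_eq_iff {x y : α} (hx : x ∈ s) (hy : y ∈ s) :
    rOf s δ x = rOf s δ y ↔ δ x = δ y := by
  constructor
  · intro h
    calc δ x = δ (rOf s δ x) := (rOf_spec hx).2.symm
      _ = δ (rOf s δ y) := by rw [h]
      _ = δ y := (rOf_spec hy).2
  · exact rOf_congr hx hy

lemma rOf_id_of_inj (hinj : ∀ x ∈ s, ∀ y ∈ s, δ x = δ y → x = y) :
    rOf s δ = id := by
  funext x
  by_cases hx : x ∈ s
  · exact hinj _ (rOf_spec hx).1 _ hx (rOf_spec hx).2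
  · exact dif_neg hx

end rOfLemmas

/-! ### The refinement chain for subgraphs of a Ktt-free graph -/

section Refine

variable {α₂ : Type*} [Fintype α₂] [DecidableEq α₂]

theorem refine_chain (K Γ' : SimpleGraph α₂) (hsub : Γ' ≤ K) {t c : ℕ} (ht : 1 ≤ t)
    (hfree : KttFree K t) (s : Finset α₂) (mK : ℕ) (RK : ℕ → α₂ → α₂)
    (hKgood : ∀ j, Good (univ : Finset α₂) (RK j))
    (hK0 : RK 0 = id)
    (hKone : ∀ x y : α₂, RK mK x = RK mK y)
    (hKcoar : ∀ j, j + 1 ≤ mK → Refines univ (RK j) (RK (j + 1)))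
    (hKblow : ∀ j, j + 1 ≤ mK → ∀ p ∈ (univ : Finset α₂),
      ((univ.image (RK j)).filter (fun w => RK (j + 1) w = RK (j + 1) p)).card ≤ 2)
    (hKmix : ∀ j, j ≤ mK → ∀ p ∈ (univ : Finset α₂),
      (mixedNbrs K univ (RK j) p).card ≤ c) :
    (Γ'.toTrigraphOn s).HasSeq ((2 * 2 ^ t) * ((2 ^ t * (c + 1)) + 1)) := by
  classical
  set Kcl : ℕ → α₂ → Finset α₂ := fun j x => univ.filter (fun z => RK j z = RK j x) with hKcl
  set bigP : ℕ → α₂ → Prop := fun j x => t ≤ (Kcl j x).card with hbigP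
  set Tset : ℕ → α₂ → Finset α₂ := fun j x =>
    univ.filter (fun z => ¬ bigP j z ∧ RK j z ≠ RK j x ∧ Compl K (Kcl j z) (Kcl j x)) with hTs
  set prof : ℕ → α₂ → Finset α₂ := fun j x => (Tset j x).filter (fun z => Γ'.Adj x z) with hpr
  set δ : ℕ → α₂ → Option (α₂ × Finset α₂) := fun j x =>
    if j ≤ mK then some (RK j x, if bigP j x then prof j x else {x}) else none with hδ
  set R : ℕ → α₂ → α₂ := fun j => rOf s (δ j) with hRdef
  have hKclrep : ∀ j x, RK j (RK j x) = RK j x := fun j x => (hKgood j).2.1 x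
  have hmemKcl : ∀ j x, x ∈ Kcl j x := by
    intro j x
    simp only [hKcl]
    exact mem_filter.2 ⟨mem_univ _, rfl⟩
  have hKclc : ∀ j x y, RK j x = RK j y → Kcl j x = Kcl j y := by
    intro j x y h
    simp only [hKcl]
    ext z
    simp only [mem_filter, h]
  have hbigc : ∀ j x y, RK j x = RK j y → (bigP j x ↔ bigP j y) := by
    intro j x y h
    simp only [hbigP, hKclc j x y h]
  have hTc : ∀ j x y, RK j x = RK j y → Tset j x = Tset j y := by
    intro j x y h
    simp only [hTs]
    ext z
    simp only [mem_filter, h, hKclc j x y h]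
  have hcoarx : ∀ j, j + 1 ≤ mK → ∀ x y, RK j x = RK j y → RK (j + 1) x = RK (j + 1) y :=
    fun j hj x y h => hKcoar j hj x (mem_univ x) y (mem_univ y) h
  have hKclmono : ∀ j, j + 1 ≤ mK → ∀ x, Kcl j x ⊆ Kcl (j + 1) x := by
    intro j hj x z hz
    simp only [hKcl, mem_filter] at hz ⊢
    exact ⟨mem_univ _, hcoarx j hj z x hz.2⟩
  have hbigmono : ∀ j, j + 1 ≤ mK → ∀ x, bigP j x → bigP (j + 1) x := by
    intro j hj x hb
    simp only [hbigP] at hb ⊢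
    exact le_trans hb (card_le_card (hKclmono j hj x))
  have hTanti : ∀ j, j + 1 ≤ mK → ∀ x, Tset (j + 1) x ⊆ Tset j x := by
    intro j hj x z hz
    simp only [hTs, mem_filter] at hz ⊢
    refine ⟨mem_univ _, fun hb => hz.2.1 (hbigmono j hj z hb), fun he => hz.2.2.1
      (hcoarx j hj z x he), hz.2.2.2.mono (hKclmono j hj z) (hKclmono j hj x)⟩
  have hF2 : ∀ j x, bigP j x → (Tset j x).card ≤ t - 1 := by
    intro j x hb
    simp only [hbigP] at hb
    by_contra hcon
    have hge : t ≤ (Tset j x).card := by omega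
    obtain ⟨A, hA, hAcard⟩ := Finset.exists_subset_card_eq hge
    obtain ⟨B, hB, hBcard⟩ := Finset.exists_subset_card_eq hb
    refine hfree ⟨A, B, ?_, hAcard, hBcard, ?_⟩
    · rw [Finset.disjoint_left]
      intro z hzA hzB
      have h1 := mem_filter.1 (hA hzA)
      have h2 := mem_filter.1 (hB hzB)
      exact h1.2.2.1 h2.2
    · intro a haA b hbB
      have h1 := hA haA
      simp only [hTs, mem_filter] at h1
      exact h1.2.2.2 a (hmemKcl j a) b (hB hbB)
  have hF1 : ∀ j x y, bigP j x → bigP j y → RK j x ≠ RK j y →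
      ¬ Compl K (Kcl j x) (Kcl j y) := by
    intro j x y hbx hby hne hcompl
    simp only [hbigP] at hbx hby
    obtain ⟨A, hA, hAcard⟩ := Finset.exists_subset_card_eq hbx
    obtain ⟨B, hB, hBcard⟩ := Finset.exists_subset_card_eq hby
    refine hfree ⟨A, B, ?_, hAcard, hBcard, fun p hp q hq => hcompl p (hA hp) q (hB hq)⟩
    rw [Finset.disjoint_left]
    intro z hzA hzB
    have h1 := hA hzA
    have h2 := hB hzB
    simp only [hKcl, mem_filter] at h1 h2
    exact hne (by rw [← h1.2, h2.2])
  have hδsome : ∀ j, j ≤ mK → ∀ x,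
      δ j x = some (RK j x, if bigP j x then prof j x else {x}) := by
    intro j hj x
    simp only [hδ, if_pos hj]
  have hδnone : ∀ j, mK < j → ∀ x, δ j x = none := by
    intro j hj x
    simp only [hδ, if_neg (by omega : ¬ j ≤ mK)]
  have hgoodR : ∀ j, Good s (R j) := fun j => rOf_good
  have hRKR : ∀ j, j ≤ mK → ∀ x, x ∈ s → RK j (R j x) = RK j x := by
    intro j hj x hx
    have h1 := (rOf_spec (s := s) (δ := δ j) hx).2
    rw [hδsome j hj (rOf s (δ j) x), hδsome j hj x] at h1
    exact congrArg Prod.fst (Option.some.inj h1)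
  have hfstδ : ∀ j, j ≤ mK → ∀ x y, x ∈ s → y ∈ s → R j x = R j y → RK j x = RK j y := by
    intro j hj x y hx hy h
    have h1 := (rOf_eq_iff hx hy).1 h
    rw [hδsome j hj x, hδsome j hj y] at h1
    exact congrArg Prod.fst (Option.some.inj h1)
  have hsmallcl : ∀ j, j ≤ mK → ∀ q, q ∈ s → R j q = q → ¬ bigP j q →
      clF s (R j) q = {q} := by
    intro j hj q hq hrep hsmall
    ext z
    simp only [clF, mem_filter, mem_singleton]
    constructor
    · rintro ⟨hzs, hz⟩
      have hδe : δ j z = δ j q := (rOf_eq_iff hzs hq).1 (show R j z = R j q by rw [hz, hrep])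
      rw [hδsome j hj z, hδsome j hj q] at hδe
      have h1 : RK j z = RK j q := congrArg Prod.fst (Option.some.inj hδe)
      have hbz : ¬ bigP j z := fun hb => hsmall ((hbigc j z q h1).1 hb)
      have h2 : (if bigP j z then prof j z else {z}) = (if bigP j q then prof j q else {q}) :=
        congrArg Prod.snd (Option.some.inj hδe)
      rw [if_neg hbz, if_neg hsmall] at h2
      exact Finset.singleton_inj.1 h2
    · intro h
      subst h
      exact ⟨hq, hrep⟩
  have hhomog : ∀ j, j ≤ mK → ∀ p, p ∈ s → bigP j p → ∀ q, q ∈ Tset j p →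
      ((∀ x ∈ clF s (R j) (R j p), Γ'.Adj x q) ∨
        (∀ x ∈ clF s (R j) (R j p), ¬ Γ'.Adj x q)) := by
    intro j hj p hp hbigp q hqT
    have key : ∀ x ∈ clF s (R j) (R j p), (Γ'.Adj x q ↔ q ∈ prof j p) := by
      intro x hx
      obtain ⟨hxs, hxc⟩ := mem_filter.1 hx
      have hδe : δ j x = δ j p := (rOf_eq_iff hxs hp).1 hxc
      rw [hδsome j hj x, hδsome j hj p] at hδe
      have h1 : RK j x = RK j p := congrArg Prod.fst (Option.some.inj hδe)
      have hbx : bigP j x := (hbigc j x p h1).2 hbigp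
      have h2 : (if bigP j x then prof j x else {x}) = (if bigP j p then prof j p else {p}) :=
        congrArg Prod.snd (Option.some.inj hδe)
      rw [if_pos hbx, if_pos hbigp] at h2
      have hqTx : q ∈ Tset j x := by rw [hTc j x p h1]; exact hqT
      constructor
      · intro hadj
        rw [← h2]
        simp only [hpr]
        exact mem_filter.2 ⟨hqTx, hadj⟩
      · intro hmem
        rw [← h2] at hmem
        simp only [hpr] at hmem
        exact (mem_filter.1 hmem).2
    by_cases hqp : q ∈ prof j p
    · exact Or.inl (fun x hx => (key x hx).2 hqp)
    · exact Or.inr (fun x hx hadj => hqp ((key x hx).1 hadj))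
  have hfiber : ∀ j, j ≤ mK → ∀ w,
      ((s.image (R j)).filter (fun q => RK j q = w)).card ≤ 2 ^ t := by
    intro j hj w
    set F := (s.image (R j)).filter (fun q => RK j q = w) with hF
    rcases F.eq_empty_or_nonempty with hFe | ⟨q0, hq0⟩
    · rw [hFe]; simp
    · have hq0' := mem_filter.1 hq0
      have hq0s := good_mem_image (hgoodR j) hq0'.1
      have hFprop : ∀ q ∈ F, q ∈ s ∧ R j q = q ∧ RK j q = RK j q0 := by
        intro q hq
        have h1 := mem_filter.1 hq
        have h2 := good_mem_image (hgoodR j) h1.1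
        exact ⟨h2.1, h2.2, by rw [h1.2, ← hq0'.2]⟩
      by_cases hbig : bigP j q0
      · have hmaps : ∀ q ∈ F, prof j q ∈ (Tset j q0).powerset := by
          intro q hq
          obtain ⟨hqs, hqrep, hqk⟩ := hFprop q hq
          rw [mem_powerset, ← hTc j q q0 hqk]
          simp only [hpr]
          exact filter_subset _ _
        have hinj : Set.InjOn (fun q => prof j q) (F : Set α₂) := by
          intro q1 h1 q2 h2 he
          obtain ⟨h1s, h1rep, h1k⟩ := hFprop q1 (Finset.mem_coe.1 h1)
          obtain ⟨h2s, h2rep, h2k⟩ := hFprop q2 (Finset.mem_coe.1 h2)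
          have he' : prof j q1 = prof j q2 := he
          have hb1 : bigP j q1 := (hbigc j q1 q0 h1k).2 hbig
          have hb2 : bigP j q2 := (hbigc j q2 q0 h2k).2 hbig
          have hδe : δ j q1 = δ j q2 := by
            rw [hδsome j hj q1, hδsome j hj q2, if_pos hb1, if_pos hb2, h1k, h2k, he']
          have hthis : R j q1 = R j q2 := (rOf_eq_iff h1s h2s).2 hδe
          rw [h1rep, h2rep] at hthis
          exact hthis
        calc F.card ≤ (Tset j q0).powerset.card :=
              Finset.card_le_card_of_injOn _ hmaps hinj
          _ = 2 ^ (Tset j q0).card := Finset.card_powerset _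
          _ ≤ 2 ^ t := Nat.pow_le_pow_right (by norm_num)
              (by have := hF2 j q0 hbig; omega)
      · have hmaps : ∀ q ∈ F, q ∈ Kcl j q0 := by
          intro q hq
          simp only [hKcl]
          exact mem_filter.2 ⟨mem_univ _, (hFprop q hq).2.2⟩
        have hle : F.card ≤ (Kcl j q0).card :=
          Finset.card_le_card_of_injOn id hmaps (fun _ _ _ _ h => h)
        simp only [hbigP] at hbig
        have h2t := Nat.lt_two_pow_self (n := t)
        omega
  refine hasSeq_of_milestones Γ' s (mK + 1) (2 * 2 ^ t) (2 ^ t * (c + 1)) R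
    (fun j => hgoodR j) ?_ (by omega) ?_ ?_ ?_ ?_
  · -- R 0 = id
    refine rOf_id_of_inj ?_
    intro x hx y hy h
    rw [hδsome 0 (Nat.zero_le _) x, hδsome 0 (Nat.zero_le _) y] at h
    have := congrArg Prod.fst (Option.some.inj h)
    rw [hK0] at this
    exact this
  · -- last milestone: single class
    intro x hx y hy
    exact rOf_congr hx hy (by rw [hδnone (mK + 1) (by omega) x, hδnone (mK + 1) (by omega) y])
  · -- coarsening
    intro j hj x hx y hy h
    refine rOf_congr hx hy ?_
    have hδxy : δ j x = δ j y := (rOf_eq_iff hx hy).1 h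
    by_cases hjm : j + 1 ≤ mK
    · have hjm' : j ≤ mK := by omega
      rw [hδsome j hjm' x, hδsome j hjm' y] at hδxy
      have hfst : RK j x = RK j y := congrArg Prod.fst (Option.some.inj hδxy)
      have hsnd : (if bigP j x then prof j x else {x}) = (if bigP j y then prof j y else {y}) :=
        congrArg Prod.snd (Option.some.inj hδxy)
      have hfst1 : RK (j + 1) x = RK (j + 1) y := hcoarx j hjm x y hfst
      rw [hδsome (j + 1) hjm x, hδsome (j + 1) hjm y]
      by_cases hb1 : bigP (j + 1) x
      · have hb1y : bigP (j + 1) y := (hbigc (j + 1) x y hfst1).1 hb1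
        rw [if_pos hb1, if_pos hb1y]
        have hTeq : Tset (j + 1) x = Tset (j + 1) y := hTc (j + 1) x y hfst1
        have hadjeq : ∀ z ∈ Tset (j + 1) x, (Γ'.Adj x z ↔ Γ'.Adj y z) := by
          intro z hz
          have hzj : z ∈ Tset j x := hTanti j hjm x hz
          by_cases hbj : bigP j x
          · have hbjy : bigP j y := (hbigc j x y hfst).1 hbj
            rw [if_pos hbj, if_pos hbjy] at hsnd
            have hTeqj : Tset j x = Tset j y := hTc j x y hfst
            constructor
            · intro hadj
              have hm : z ∈ prof j x := by
                simp only [hpr]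
                exact mem_filter.2 ⟨hzj, hadj⟩
              rw [hsnd] at hm
              simp only [hpr] at hm
              exact (mem_filter.1 hm).2
            · intro hadj
              have hm : z ∈ prof j y := by
                simp only [hpr]
                exact mem_filter.2 ⟨hTeqj ▸ hzj, hadj⟩
              rw [← hsnd] at hm
              simp only [hpr] at hm
              exact (mem_filter.1 hm).2
          · have hbjy : ¬ bigP j y := fun hh => hbj ((hbigc j x y hfst).2 hh)
            rw [if_neg hbj, if_neg hbjy] at hsnd
            rw [Finset.singleton_inj.1 hsnd]
        have hprofeq : prof (j + 1) x = prof (j + 1) y := by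
          ext z
          simp only [hpr, mem_filter]
          constructor
          · rintro ⟨hzT, hadj⟩
            exact ⟨hTeq ▸ hzT, (hadjeq z hzT).1 hadj⟩
          · rintro ⟨hzT, hadj⟩
            have hzT' : z ∈ Tset (j + 1) x := hTeq ▸ hzT
            exact ⟨hzT', (hadjeq z hzT').2 hadj⟩
        rw [hfst1, hprofeq]
      · have hb1y : ¬ bigP (j + 1) y := fun hh => hb1 ((hbigc (j + 1) x y hfst1).2 hh)
        rw [if_neg hb1, if_neg hb1y]
        have hbj : ¬ bigP j x := fun hh => hb1 (hbigmono j hjm x hh)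
        have hbjy : ¬ bigP j y := fun hh => hbj ((hbigc j x y hfst).2 hh)
        rw [if_neg hbj, if_neg hbjy] at hsnd
        rw [hfst1, Finset.singleton_inj.1 hsnd]
    · rw [hδnone (j + 1) (by omega) x, hδnone (j + 1) (by omega) y]
  · -- blowup
    intro j hj p hp
    by_cases hjm : j + 1 ≤ mK
    · set F := (s.image (R j)).filter (fun w => R (j + 1) w = R (j + 1) p) with hFdef
      have hfib : ∀ z ∈ F.image (RK j), (F.filter (fun q => RK j q = z)).card ≤ 2 ^ t := by
        intro z _
        refine le_trans (Finset.card_le_card ?_) (hfiber j (by omega) z)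
        intro q hq
        obtain ⟨hqF, hqz⟩ := mem_filter.1 hq
        exact mem_filter.2 ⟨(mem_filter.1 hqF).1, hqz⟩
      have himg : F.image (RK j) ⊆
          (univ.image (RK j)).filter (fun w => RK (j + 1) w = RK (j + 1) p) := by
        intro z hz
        obtain ⟨q, hq, rfl⟩ := mem_image.1 hz
        obtain ⟨hqim, hqc⟩ := mem_filter.1 hq
        have hqs := good_mem_image (hgoodR j) hqim
        refine mem_filter.2 ⟨mem_image_of_mem _ (mem_univ q), ?_⟩
        have e1 : RK (j + 1) (RK j q) = RK (j + 1) q :=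
          hcoarx j hjm (RK j q) q (hKclrep j q)
        have hδe : δ (j + 1) q = δ (j + 1) p := (rOf_eq_iff hqs.1 hp).1 hqc
        rw [hδsome (j + 1) hjm q, hδsome (j + 1) hjm p] at hδe
        have e2 : RK (j + 1) q = RK (j + 1) p := congrArg Prod.fst (Option.some.inj hδe)
        rw [e1, e2]
      calc F.card ≤ 2 ^ t * (F.image (RK j)).card :=
            Finset.card_le_mul_card_image (f := RK j) F (2 ^ t) hfib
        _ ≤ 2 ^ t * 2 := Nat.mul_le_mul_left _
            (le_trans (Finset.card_le_card himg) (hKblow j hjm p (mem_univ p)))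
        _ = 2 * 2 ^ t := Nat.mul_comm _ _
    · have hje : j = mK := by omega
      rw [hje]
      have hsubF : (s.image (R mK)).filter (fun w => R (mK + 1) w = R (mK + 1) p) ⊆
          (s.image (R mK)).filter (fun q => RK mK q = RK mK p) := by
        intro q hq
        exact mem_filter.2 ⟨(mem_filter.1 hq).1, hKone q p⟩
      have h2t : (2 : ℕ) ^ t ≤ 2 * 2 ^ t := by
        have : 0 < (2 : ℕ) ^ t := Nat.pow_pos (n := t) (by norm_num)
        omega
      exact le_trans (Finset.card_le_card hsubF) (le_trans (hfiber mK le_rfl _) h2t)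
  · -- mixed degree
    intro j hj p hp
    by_cases hjm : j ≤ mK
    · set N := mixedNbrs Γ' s (R j) p with hNdef
      have hNprops : ∀ q ∈ N, q ∈ s ∧ R j q = q ∧ q ≠ R j p ∧
          MixedP Γ' (clF s (R j) (R j p)) (clF s (R j) q) := by
        intro q hq
        obtain ⟨hqim, hqne, hqmix⟩ := mem_filter.1 hq
        have h2 := good_mem_image (hgoodR j) hqim
        exact ⟨h2.1, h2.2, hqne, hqmix⟩
      have hfib : ∀ z ∈ N.image (RK j), (N.filter (fun q => RK j q = z)).card ≤ 2 ^ t := by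
        intro z _
        refine le_trans (Finset.card_le_card ?_) (hfiber j hjm z)
        intro q hq
        obtain ⟨hqN, hqz⟩ := mem_filter.1 hq
        exact mem_filter.2 ⟨(mem_filter.1 hqN).1, hqz⟩
      have hKclP : ∀ x : α₂, clF univ (RK j) (RK j x) = Kcl j x := by
        intro x
        simp only [hKcl]
        rfl
      have himg : N.image (RK j) ⊆ insert (RK j p) (mixedNbrs K univ (RK j) p) := by
        intro z hz
        obtain ⟨q, hqN, rfl⟩ := mem_image.1 hz
        obtain ⟨hqs, hqrep, hqne, hqmix⟩ := hNprops q hqN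
        by_cases hzz : RK j q = RK j p
        · rw [hzz]; exact mem_insert_self _ _
        · refine mem_insert_of_mem (mem_filter.2
            ⟨mem_image_of_mem _ (mem_univ q), hzz, ?_, ?_⟩)
          · -- HasE K
            obtain ⟨x, hxm, y, hym, hadj⟩ := hqmix.1
            obtain ⟨hxs, hxc⟩ := mem_filter.1 hxm
            obtain ⟨hys, hyc⟩ := mem_filter.1 hym
            have hx1 : RK j x = RK j p := hfstδ j hjm x p hxs hp hxc
            have hy1 : RK j y = RK j q := hfstδ j hjm y q hys hqs (by rw [hyc, hqrep])
            exact ⟨x, mem_filter.2 ⟨mem_univ _, hx1⟩, y,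
              mem_filter.2 ⟨mem_univ _, hy1⟩, hsub hadj⟩
          · -- not complete in K
            intro hcompl
            rw [hKclP p, hKclP q] at hcompl
            have hRpS : R j p ∈ s := (rOf_spec hp).1
            have hRprep : R j (R j p) = R j p := (hgoodR j).2.1 p
            have hRKrp : RK j (R j p) = RK j p := hRKR j hjm p hp
            by_cases hbq : bigP j q
            · by_cases hbp : bigP j p
              · exact hF1 j p q hbp hbq (fun h => hzz h.symm) hcompl
              · -- p small, q big
                have hsmallRp : ¬ bigP j (R j p) :=
                  fun hb => hbp ((hbigc j (R j p) p hRKrp).1 hb)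
                have hsmallP : clF s (R j) (R j p) = {R j p} :=
                  hsmallcl j hjm (R j p) hRpS hRprep hsmallRp
                have hpT : (R j p) ∈ Tset j q := by
                  simp only [hTs]
                  refine mem_filter.2 ⟨mem_univ _, hsmallRp, ?_, ?_⟩
                  · rw [hRKrp]; exact fun h => hzz h.symm
                  · rw [hKclc j (R j p) p hRKrp]
                    exact hcompl
                rcases hhomog j hjm q hqs hbq (R j p) hpT with hall | hnone
                · apply hqmix.2
                  intro x hxm y hym
                  rw [hsmallP, mem_singleton] at hxm
                  subst hxm
                  have hy' : y ∈ clF s (R j) (R j q) := by rw [hqrep]; exact hym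
                  exact (hall y hy').symm
                · obtain ⟨x, hxm, y, hym, hadj⟩ := hqmix.1
                  rw [hsmallP, mem_singleton] at hxm
                  subst hxm
                  have hy' : y ∈ clF s (R j) (R j q) := by rw [hqrep]; exact hym
                  exact hnone y hy' hadj.symm
            · have hqcl : clF s (R j) q = {q} := hsmallcl j hjm q hqs hqrep hbq
              by_cases hbp : bigP j p
              · have hqT : q ∈ Tset j p := by
                  simp only [hTs]
                  refine mem_filter.2 ⟨mem_univ _, hbq, hzz, hcompl.symm⟩
                rcases hhomog j hjm p hp hbp q hqT with hall | hnone
                · apply hqmix.2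
                  intro x hxm y hym
                  rw [hqcl, mem_singleton] at hym
                  subst hym
                  exact hall x hxm
                · obtain ⟨x, hxm, y, hym, hadj⟩ := hqmix.1
                  rw [hqcl, mem_singleton] at hym
                  subst hym
                  exact hnone x hxm hadj
              · have hsmallRp : ¬ bigP j (R j p) :=
                  fun hb => hbp ((hbigc j (R j p) p hRKrp).1 hb)
                have hsmallP : clF s (R j) (R j p) = {R j p} :=
                  hsmallcl j hjm (R j p) hRpS hRprep hsmallRp
                have hmix2 := hqmix
                rw [hsmallP, hqcl] at hmix2
                exact not_mixedP_singleton Γ' _ _ hmix2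
      calc N.card ≤ 2 ^ t * (N.image (RK j)).card :=
            Finset.card_le_mul_card_image (f := RK j) N (2 ^ t) hfib
        _ ≤ 2 ^ t * (c + 1) := by
            refine Nat.mul_le_mul_left _ ?_
            refine le_trans (Finset.card_le_card himg) ?_
            refine le_trans (card_insert_le _ _) ?_
            have := hKmix j hjm p (mem_univ p)
            omega
    · have hje : j = mK + 1 := by omega
      subst hje
      have hN : mixedNbrs Γ' s (R (mK + 1)) p = ∅ := by
        rw [eq_empty_iff_forall_notMem]
        intro q hq
        obtain ⟨hqim, hqne, _⟩ := mem_filter.1 hq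
        apply hqne
        obtain ⟨x, hx, rfl⟩ := mem_image.1 hqim
        exact rOf_congr hx hp
          (by rw [hδnone (mK + 1) (by omega) x, hδnone (mK + 1) (by omega) p])
      rw [hN]
      simp

end Refine

end TwwAux
/-- there is a function `f` such that whenever `tww(G) ≤ a`, `tww(H) ≤ b`,
`Δ(H) ≤ D` and `G ⊠ H` is `K_{t,t}`-free, every subgraph of `G ⊠ H` (obtained by deleting
vertices and/or edges) has twin-width at most `f a b D t`. -/
theorem twin_width_subgraphs_of_strong_product :
    ∃ f : ℕ → ℕ → ℕ → ℕ → ℕ,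
      ∀ (a b D t : ℕ) (V W : Type) [Fintype V] [Fintype W] [DecidableEq V] [DecidableEq W]
        (G : SimpleGraph V) (H : SimpleGraph W),
        Trigraph.tww G.toTrigraph ≤ a → Trigraph.tww H.toTrigraph ≤ b → maxDeg H ≤ D →
        KttFree (strongProd G H) t →
        ∀ (G' : SimpleGraph (V × W)) (s : Finset (V × W)), G' ≤ strongProd G H →
          Trigraph.tww (G'.toTrigraphOn s) ≤ f a b D t := by
  classical
  refine ⟨fun a b D t =>
    (2 * 2 ^ t) * ((2 ^ t * ((max ((a + 1) * (D + 1)) (b + D)) + 1)) + 1), ?_⟩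
  intro a b D t V W _ _ _ _ G H hGa hHb hD hKtt G' s hsub
  rcases Nat.eq_zero_or_pos t with ht0 | ht
  · exfalso
    apply hKtt
    refine ⟨∅, ∅, by simp, by simp [ht0], by simp [ht0], ?_⟩
    intro x hx
    exact absurd hx (Finset.notMem_empty _)
  · obtain ⟨mK, RK, hKgood, hK0, hKone, hKcoar, hKblow, hKmix⟩ :=
      TwwAux.product_chain G H hGa hHb hD
    have hmain := TwwAux.refine_chain (strongProd G H) G' hsub ht hKtt s mK RK
      hKgood hK0 hKone hKcoar hKblow hKmix
    exact Nat.sInf_le hmain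
end
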